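/- arXiv:2301.13478 — 4 statements merged into one kernel-verified Lean document; each statement's English description precedes it below -/
import Mathlib

section
/- For all x, z in ℝⁿ with z ≠ 0 and r > 0, the Haar probability measure θₙ on the orthogonal group O(n) satisfies θₙ({g ∈ O(n) : |x − g(z)| < r}) ≤ C (r/|z|)^{n−1}, where C depends only on n. -/
open MeasureTheory Metric Set Function
open scoped ENNReal NNReal Topology

noncomputable section

/-- `ℝⁿ` as Euclidean space. -/
abbrev En (n : ℕ) := EuclideanSpace ℝ (Fin n)

instance matrixMeasurableSpace {n : ℕ} : MeasurableSpace (Matrix (Fin n) (Fin n) ℝ) :=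
  MeasurableSpace.pi

/-- The orthogonal group `O(n)`. -/
abbrev On (n : ℕ) := Matrix.orthogonalGroup (Fin n) ℝ

/-- The action of `g ∈ O(n)` on `ℝⁿ`. -/
def act {n : ℕ} (g : On n) (z : En n) : En n :=
  Matrix.toEuclideanLin ((g : Matrix (Fin n) (Fin n) ℝ)) z

namespace StmtAux

variable {n : ℕ}

lemma toEL_mul (A B : Matrix (Fin n) (Fin n) ℝ) (v : En n) :
    Matrix.toEuclideanLin (A * B) v = Matrix.toEuclideanLin A (Matrix.toEuclideanLin B v) := by
  simp [Matrix.toEuclideanLin_apply, Matrix.mulVec_mulVec]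

lemma act_mul (g h : On n) (z : En n) : act (g * h) z = act g (act h z) := by
  simp only [act, Submonoid.coe_mul, toEL_mul]

lemma act_sub (g : On n) (a b : En n) : act g (a - b) = act g a - act g b := by
  simp [act, map_sub]

lemma inner_act (g : On n) (v w : En n) :
    inner ℝ (act g v) (act g w) = (inner ℝ v w : ℝ) := by
  rw [act, act, ← LinearMap.adjoint_inner_left, ← Matrix.toEuclideanLin_conjTranspose_eq_adjoint,
    ← toEL_mul]
  have : (g : Matrix (Fin n) (Fin n) ℝ).conjTranspose * g = 1 := by
    simpa [star] using Matrix.UnitaryGroup.star_mul_self g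
  rw [this]
  simp [Matrix.toEuclideanLin_apply]

lemma norm_act (g : On n) (v : En n) : ‖act g v‖ = ‖v‖ := by
  have h := inner_act g v v
  rw [real_inner_self_eq_norm_sq, real_inner_self_eq_norm_sq] at h
  nlinarith [norm_nonneg (act g v), norm_nonneg v]

/-- any linear isometry equiv of `En n` comes from an orthogonal matrix -/
lemma exists_act_eq (φ : En n ≃ₗᵢ[ℝ] En n) : ∃ g : On n, ∀ v, act g v = φ v := by
  set M : Matrix (Fin n) (Fin n) ℝ :=
    Matrix.toEuclideanLin.symm (φ.toLinearEquiv : En n →ₗ[ℝ] En n) with hM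
  have hMap : ∀ v, Matrix.toEuclideanLin M v = φ v := by
    intro v
    rw [hM, LinearEquiv.apply_symm_apply]
    rfl
  have hmem : M ∈ Matrix.orthogonalGroup (Fin n) ℝ := by
    rw [Matrix.mem_orthogonalGroup_iff']
    apply Matrix.toEuclideanLin.injective
    apply LinearMap.ext
    intro v
    rw [toEL_mul]
    have hstar : (M.transpose : Matrix (Fin n) (Fin n) ℝ) = M.conjTranspose :=
      (Matrix.conjTranspose_eq_transpose_of_trivial M).symm
    rw [hstar, Matrix.toEuclideanLin_conjTranspose_eq_adjoint, hMap]
    apply ext_inner_left ℝ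
    intro w
    rw [LinearMap.adjoint_inner_right, hMap]
    simp [Matrix.toEuclideanLin_apply, φ.inner_map_map]
  exact ⟨⟨M, hmem⟩, hMap⟩

lemma exists_act_sends (z s : En n) (h : ‖s‖ = ‖z‖) : ∃ g : On n, act g z = s := by
  obtain ⟨g, hg⟩ := exists_act_eq (Submodule.reflection (ℝ ∙ (z - s))ᗮ)
  exact ⟨g, by rw [hg]; exact Submodule.reflection_sub h.symm⟩

instance matBorel : BorelSpace (Matrix (Fin n) (Fin n) ℝ) := Pi.borelSpace

lemma measurable_act_set (x z : En n) (r : ℝ) :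
    MeasurableSet {g : On n | ‖x - act g z‖ < r} := by
  have hc : Continuous fun M : Matrix (Fin n) (Fin n) ℝ => ‖x - Matrix.toEuclideanLin M z‖ := by
    let L : Matrix (Fin n) (Fin n) ℝ →ₗ[ℝ] En n :=
      { toFun := fun M => Matrix.toEuclideanLin M z
        map_add' := by intro a b; simp
        map_smul' := by intro c a; simp }
    have : Continuous fun M : Matrix (Fin n) (Fin n) ℝ => Matrix.toEuclideanLin M z :=
      L.continuous_of_finiteDimensional
    exact (continuous_const.sub this).norm
  have : Measurable fun g : On n => ‖x - act g z‖ :=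
    hc.measurable.comp measurable_subtype_coe
  exact this measurableSet_Iio

instance bOn (n : ℕ) : BorelSpace (On n) := Subtype.borelSpace _
instance mmOn (n : ℕ) : MeasurableMul (On n) :=
  @ContinuousMul.measurableMul (On n) _ _ (bOn n) _ _

end StmtAux

open StmtAux

set_option maxHeartbeats 1000000 in
/-- For all `x, z ∈ ℝⁿ` with `z ≠ 0` and `r > 0`, the Haar probability measure `θₙ` on `O(n)`
satisfies `θₙ {g : |x - g z| < r} ≤ C (r/|z|)^(n-1)` with `C = C(n)`. -/
theorem stmt0 (n : ℕ) (θ : Measure (On n)) [θ.IsHaarMeasure] [IsProbabilityMeasure θ] :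
    ∃ C : ℝ≥0∞, C ≠ ∞ ∧ ∀ (x z : En n), z ≠ 0 → ∀ r : ℝ, 0 < r →
      θ {g : On n | ‖x - act g z‖ < r} ≤ C * ENNReal.ofReal (r / ‖z‖) ^ (n - 1) := by
  classical
  obtain rfl | hn := Nat.eq_zero_or_pos n
  · refine ⟨1, ENNReal.one_ne_top, fun x z hz => absurd ?_ hz⟩
    ext i
    exact absurd i.2 (Nat.not_lt_zero _)
  obtain ⟨k, rfl⟩ : ∃ k, n = k + 1 := ⟨n - 1, (Nat.succ_pred_eq_of_pos hn).symm⟩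
  set K : ℝ := 2 ^ k * 5 ^ (k + 1) with hK
  have h2k : (1:ℝ) ≤ 2 ^ k := one_le_pow₀ (by norm_num)
  have h5k : (1:ℝ) ≤ 5 ^ (k + 1) := one_le_pow₀ (by norm_num)
  have hK1 : (1:ℝ) ≤ K := by nlinarith
  refine ⟨ENNReal.ofReal K, ENNReal.ofReal_ne_top, ?_⟩
  intro x z hz r hr
  haveI : Nontrivial (En (k + 1)) := ⟨⟨z, 0, hz⟩⟩
  set ρ : ℝ := ‖z‖ with hρdef
  have hρ : 0 < ρ := norm_pos_iff.mpr hz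
  have hrρ : 0 ≤ r / ρ := div_nonneg hr.le hρ.le
  simp only [Nat.add_sub_cancel]
  by_cases hcase : ρ ≤ 2 * r
  · -- trivial case: r is large
    have h1 : (1:ℝ≥0∞) ≤ ENNReal.ofReal K * ENNReal.ofReal (r / ρ) ^ k := by
      rw [← ENNReal.ofReal_pow hrρ, ← ENNReal.ofReal_mul (by positivity)]
      rw [ENNReal.one_le_ofReal]
      have h2 : (1:ℝ)/2 ≤ r / ρ := by
        rw [div_le_div_iff₀ (by norm_num) hρ]
        linarith
      calc (1:ℝ) = 2 ^ k * (1/2)^k := by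
            rw [← mul_pow]; norm_num
        _ ≤ 2 ^ k * (r/ρ)^k :=
            mul_le_mul_of_nonneg_left (pow_le_pow_left₀ (by norm_num) h2 k) (by positivity)
        _ ≤ K * (r/ρ)^k := by
            have hKK : (2:ℝ)^k ≤ K := by nlinarith [pow_pos (by norm_num : (0:ℝ) < 2) k]
            exact mul_le_mul_of_nonneg_right hKK (by positivity)
    calc θ {g : On (k + 1) | ‖x - act g z‖ < r} ≤ 1 := prob_le_one
      _ ≤ _ := h1
  push_neg at hcase
  -- main case : 2 * r < ρ
  set A := {g : On (k + 1) | ‖x - act g z‖ < r} with hA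
  set B := {g : On (k + 1) | ‖z - act g z‖ < 2 * r} with hB
  -- Step A : θ A ≤ θ B
  have stepA : θ A ≤ θ B := by
    rcases eq_empty_or_nonempty A with hAe | ⟨g0, hg0⟩
    · simp [hAe]
    have hsub : A ⊆ (fun g => g0⁻¹ * g) ⁻¹' B := by
      intro g hg
      simp only [mem_preimage, hB, mem_setOf_eq]
      have e1 : ‖z - act (g0⁻¹ * g) z‖ = ‖act g0 z - act g z‖ := by
        rw [← norm_act g0 (z - act (g0⁻¹ * g) z), act_sub, ← act_mul, mul_inv_cancel_left]
      rw [e1]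
      have t1 : ‖act g0 z - act g z‖ ≤ ‖act g0 z - x‖ + ‖x - act g z‖ := by
        have := norm_sub_le_norm_sub_add_norm_sub (act g0 z) x (act g z)
        linarith [this]
      have t2 : ‖act g0 z - x‖ < r := by rw [norm_sub_rev]; exact hg0
      have t3 : ‖x - act g z‖ < r := hg
      linarith
    calc θ A ≤ θ ((fun g => g0⁻¹ * g) ⁻¹' B) := measure_mono hsub
      _ = θ B := measure_preimage_mul θ _ _
  -- Step B : a maximal 4r-separated subset of the sphere of radius ρ
  set Sep : Set (Set (En (k + 1))) :=
    {S | S ⊆ sphere (0 : En (k + 1)) ρ ∧ S.Pairwise fun a b => 4 * r ≤ dist a b} with hSep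
  obtain ⟨m, hm⟩ : ∃ m, Maximal (· ∈ Sep) m := by
    apply zorn_subset
    intro c hc hchain
    refine ⟨⋃₀ c, ⟨sUnion_subset fun s hs => (hc hs).1, ?_⟩, fun s hs => subset_sUnion_of_mem hs⟩
    intro a ha b hb hab
    obtain ⟨s, hs, has⟩ := ha
    obtain ⟨t, ht, hbt⟩ := hb
    rcases hchain.total hs ht with hst | hts
    · exact (hc ht).2 (hst has) hbt hab
    · exact (hc hs).2 has (hts hbt) hab
  have hm1 : m ⊆ sphere (0 : En (k + 1)) ρ := hm.1.1
  have hm2 : m.Pairwise fun a b => 4 * r ≤ dist a b := hm.1.2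
  -- maximality gives covering of the sphere
  have hcover : ∀ p ∈ sphere (0 : En (k + 1)) ρ, ∃ s ∈ m, dist p s < 4 * r := by
    intro p hp
    by_contra hcon
    push_neg at hcon
    have hpm : p ∉ m := by
      intro hpm
      have := hcon p hpm
      simp at this
      linarith
    have hins : insert p m ∈ Sep := by
      constructor
      · exact insert_subset hp hm1
      · refine Set.pairwise_insert.mpr ⟨hm2, fun b hb _ => ⟨?_, ?_⟩⟩
        · exact hcon b hb
        · rw [dist_comm]; exact hcon b hb
    have := hm.2 hins (subset_insert p m) (mem_insert p m)
    exact hpm this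
  -- m is finite
  have hfin : m.Finite := by
    obtain ⟨t, htf, hcov⟩ :=
      totallyBounded_iff.mp (isCompact_sphere (0 : En (k + 1)) ρ).totallyBounded (2 * r) (by positivity)
    have hpick : ∀ s ∈ m, ∃ y ∈ t, s ∈ ball y (2 * r) := by
      intro s hs
      have := hcov (hm1 hs)
      simpa using this
    choose f hf1 hf2 using hpick
    have hinj : m.InjOn fun s => if h : s ∈ m then f s h else s := by
      intro a ha b hb hab
      simp only [dif_pos ha, dif_pos hb] at hab
      by_contra hne
      have h4 : 4 * r ≤ dist a b := hm2 ha hb hne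
      have da := hf2 a ha
      have db := hf2 b hb
      rw [mem_ball] at da db
      rw [hab] at da
      have : dist a b < 4 * r := by
        calc dist a b ≤ dist a (f b hb) + dist (f b hb) b := dist_triangle _ _ _
          _ < 2 * r + 2 * r := by rw [dist_comm (f b hb) b]; exact add_lt_add da db
          _ = 4 * r := by ring
      linarith
    apply Set.Finite.of_finite_image _ hinj
    apply htf.subset
    rintro y ⟨s, hs, rfl⟩
    simp only [dif_pos hs]
    exact hf1 s hs
  set S : Finset (En (k + 1)) := hfin.toFinset with hS
  have hSmem : ∀ s, s ∈ S ↔ s ∈ m := fun s => hfin.mem_toFinset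
  set N : ℕ := S.card with hN
  -- Step C : lower bound on N via Lebesgue volume
  have hv0 : volume (ball (0 : En (k + 1)) 1) ≠ 0 := (measure_ball_pos _ _ one_pos).ne'
  have hvtop : volume (ball (0 : En (k + 1)) 1) ≠ ⊤ := measure_ball_lt_top.ne
  have hannulus :
      closedBall (0 : En (k + 1)) ρ \ ball (0 : En (k + 1)) (ρ - r) ⊆ ⋃ s ∈ S, ball s (5 * r) := by
    intro y hy
    obtain ⟨hy1, hy2⟩ := hy
    rw [mem_closedBall, dist_zero_right] at hy1
    rw [mem_ball, dist_zero_right, not_lt] at hy2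
    have hy0 : 0 < ‖y‖ := by linarith
    set p : En (k + 1) := (ρ / ‖y‖) • y with hp
    have hpnorm : ‖p‖ = ρ := by
      rw [hp, norm_smul, Real.norm_eq_abs, abs_of_pos (by positivity)]
      field_simp
    obtain ⟨s, hsmem, hps⟩ := hcover p (by rwa [mem_sphere_zero_iff_norm])
    have hyp : dist y p = ρ - ‖y‖ := by
      have e1 : y - p = (1 - ρ / ‖y‖) • y := by
        rw [hp, sub_smul, one_smul]
      rw [dist_eq_norm, e1, norm_smul, Real.norm_eq_abs]
      have h1yle : (1 : ℝ) - ρ / ‖y‖ ≤ 0 := by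
        rw [sub_nonpos, le_div_iff₀ hy0]
        linarith
      rw [abs_of_nonpos h1yle, neg_sub, sub_mul, one_mul, div_mul_cancel₀ _ hy0.ne']
    refine mem_biUnion ((hSmem s).mpr hsmem) ?_
    rw [mem_ball]
    calc dist y s ≤ dist y p + dist p s := dist_triangle _ _ _
      _ < (ρ - ‖y‖) + 4 * r := by rw [hyp]; exact add_lt_add_right hps _
      _ ≤ r + 4 * r := by linarith
      _ = 5 * r := by ring
  have hannvol :
      volume (closedBall (0 : En (k + 1)) ρ \ ball (0 : En (k + 1)) (ρ - r)) =
        ENNReal.ofReal (ρ ^ (k + 1) - (ρ - r) ^ (k + 1)) * volume (ball (0 : En (k + 1)) 1) := by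
    have hsub' : ball (0 : En (k + 1)) (ρ - r) ⊆ closedBall (0 : En (k + 1)) ρ :=
      ball_subset_closedBall.trans (closedBall_subset_closedBall (by linarith))
    rw [measure_diff hsub' measurableSet_ball.nullMeasurableSet measure_ball_lt_top.ne,
      Measure.addHaar_closedBall _ _ hρ.le, Measure.addHaar_ball _ _ (by linarith : (0:ℝ) ≤ ρ - r),
      finrank_euclideanSpace_fin, ENNReal.ofReal_sub _ (pow_nonneg (by linarith) _),
      ENNReal.sub_mul (fun _ _ => hvtop)]
  have hkey : ρ ^ (k + 1) - (ρ - r) ^ (k + 1) ≤ (N : ℝ) * (5 * r) ^ (k + 1) := by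
    have h1 : volume (closedBall (0 : En (k + 1)) ρ \ ball (0 : En (k + 1)) (ρ - r)) ≤
        ∑ s ∈ S, volume (ball s (5 * r)) :=
      le_trans (measure_mono hannulus) (measure_biUnion_finset_le S _)
    have h2 : ∀ s ∈ S, volume (ball s (5 * r)) =
        ENNReal.ofReal ((5 * r) ^ (k + 1)) * volume (ball (0 : En (k + 1)) 1) := by
      intro s _
      rw [Measure.addHaar_ball _ _ (by positivity : (0:ℝ) ≤ 5 * r), finrank_euclideanSpace_fin]
    rw [Finset.sum_congr rfl h2, Finset.sum_const, hannvol, nsmul_eq_mul, ← mul_assoc] at h1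
    have h3 : ENNReal.ofReal (ρ ^ (k + 1) - (ρ - r) ^ (k + 1)) ≤
        (N : ℝ≥0∞) * ENNReal.ofReal ((5 * r) ^ (k + 1)) :=
      (ENNReal.mul_le_mul_iff_left hv0 hvtop).mp h1
    rw [← ENNReal.ofReal_natCast, ← ENNReal.ofReal_mul (by positivity)] at h3
    exact (ENNReal.ofReal_le_ofReal_iff (by positivity)).mp h3
  have hlow : r * (ρ / 2) ^ k ≤ ρ ^ (k + 1) - (ρ - r) ^ (k + 1) := by
    have h1 : ρ - r ≥ ρ / 2 := by linarith
    have h2 : (ρ - r) ^ (k + 1) = (ρ - r) * (ρ - r) ^ k := by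
      rw [pow_succ']
    have h3 : ρ ^ (k + 1) = ρ * ρ ^ k := by rw [pow_succ']
    have h4 : (ρ - r) ^ k ≤ ρ ^ k := pow_le_pow_left₀ (by linarith) (by linarith) k
    have h5 : (ρ / 2) ^ k ≤ (ρ - r) ^ k := pow_le_pow_left₀ (by positivity) (by linarith) k
    nlinarith [pow_nonneg (by linarith : (0:ℝ) ≤ ρ - r) k, pow_pos hρ k]
  have hNpos : 0 < N := by
    by_contra hcon
    push_neg at hcon
    interval_cases N
    simp only [Nat.cast_zero, zero_mul] at hkey
    nlinarith [pow_pos (by positivity : (0:ℝ) < ρ / 2) k, hkey, hlow]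
  -- Step D : disjoint translates
  set D : En (k + 1) → Set (On (k + 1)) :=
    fun s => {g : On (k + 1) | ‖s - act g z‖ < 2 * r} with hD
  have hθD : ∀ s ∈ S, θ (D s) = θ B := by
    intro s hs
    have hsn : ‖s‖ = ρ := by
      have := hm1 ((hSmem s).mp hs)
      rwa [mem_sphere_zero_iff_norm] at this
    obtain ⟨gs, hgs⟩ := exists_act_sends z s hsn
    have heq : D s = (fun g => gs⁻¹ * g) ⁻¹' B := by
      ext g
      simp only [hD, mem_setOf_eq, mem_preimage, hB]
      have e1 : ‖z - act (gs⁻¹ * g) z‖ = ‖s - act g z‖ := by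
        rw [← norm_act gs (z - act (gs⁻¹ * g) z), act_sub, ← act_mul, mul_inv_cancel_left, hgs]
      rw [e1]
    rw [heq, measure_preimage_mul]
  have hdisj : (S : Set (En (k + 1))).PairwiseDisjoint D := by
    intro a ha b hb hab
    refine Set.disjoint_left.mpr fun g hga hgb => ?_
    have h4 : 4 * r ≤ dist a b :=
      hm2 ((hSmem a).mp (by simpa using ha)) ((hSmem b).mp (by simpa using hb)) hab
    have : dist a b < 4 * r := by
      calc dist a b ≤ dist a (act g z) + dist (act g z) b := dist_triangle _ _ _
        _ < 2 * r + 2 * r := by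
            refine add_lt_add ?_ ?_
            · rw [dist_eq_norm]; exact hga
            · rw [dist_comm, dist_eq_norm]; exact hgb
        _ = 4 * r := by ring
    linarith
  have hsum : (N : ℝ≥0∞) * θ B ≤ 1 := by
    have h1 : ∑ s ∈ S, θ (D s) = θ (⋃ s ∈ S, D s) :=
      (measure_biUnion_finset hdisj fun s _ => measurable_act_set s z (2 * r)).symm
    have h2 : θ (⋃ s ∈ S, D s) ≤ 1 := prob_le_one
    calc (N : ℝ≥0∞) * θ B = ∑ _s ∈ S, θ B := by rw [Finset.sum_const, nsmul_eq_mul]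
      _ = ∑ s ∈ S, θ (D s) := (Finset.sum_congr rfl hθD).symm
      _ ≤ 1 := h1 ▸ h2
  have hθB : θ B ≤ (N : ℝ≥0∞)⁻¹ := by
    rw [ENNReal.le_inv_iff_mul_le]
    rwa [mul_comm] at hsum
  -- final computation
  have hNR : (0:ℝ) < (N : ℝ) := Nat.cast_pos.mpr hNpos
  have hfinal : ((N : ℝ))⁻¹ ≤ K * (r / ρ) ^ k := by
    set a : ℝ := (r / ρ) ^ k with ha
    have ha0 : 0 < a := by positivity
    have key2 : 1 ≤ (N : ℝ) * (K * a) := by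
      have e1 : (ρ / 2) ^ k * a = (r / 2) ^ k := by
        rw [ha, ← mul_pow]
        congr 1
        field_simp
      have step : r * (r / 2) ^ k ≤ (N : ℝ) * (5 * r) ^ (k + 1) * a := by
        calc r * (r / 2) ^ k = r * ((ρ / 2) ^ k * a) := by rw [e1]
          _ = (r * (ρ / 2) ^ k) * a := by ring
          _ ≤ ((N : ℝ) * (5 * r) ^ (k + 1)) * a :=
              mul_le_mul_of_nonneg_right (le_trans hlow hkey) ha0.le
      have e2 : r * (r / 2) ^ k = r ^ (k + 1) * (1 / 2 ^ k) := by
        rw [div_pow, pow_succ']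
        ring
      have e3 : (N : ℝ) * (5 * r) ^ (k + 1) * a = r ^ (k + 1) * ((N : ℝ) * 5 ^ (k + 1) * a) := by
        rw [mul_pow]
        ring
      rw [e2, e3] at step
      have hrn : (0:ℝ) < r ^ (k + 1) := by positivity
      have step2 : 1 / 2 ^ k ≤ (N : ℝ) * 5 ^ (k + 1) * a :=
        le_of_mul_le_mul_left step hrn
      calc (1:ℝ) = 2 ^ k * (1 / 2 ^ k) := by field_simp
        _ ≤ 2 ^ k * ((N : ℝ) * 5 ^ (k + 1) * a) :=
            mul_le_mul_of_nonneg_left step2 (by positivity)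
        _ = (N : ℝ) * (K * a) := by rw [hK]; ring
    calc ((N : ℝ))⁻¹ = ((N : ℝ))⁻¹ * 1 := by ring
      _ ≤ ((N : ℝ))⁻¹ * ((N : ℝ) * (K * a)) := by
          apply mul_le_mul_of_nonneg_left key2 (by positivity)
      _ = K * a := by field_simp
  calc θ A ≤ θ B := stepA
    _ ≤ (N : ℝ≥0∞)⁻¹ := hθB
    _ = ENNReal.ofReal ((N : ℝ))⁻¹ := by
        rw [← ENNReal.ofReal_natCast, ENNReal.ofReal_inv_of_pos hNR]
    _ ≤ ENNReal.ofReal (K * (r / ρ) ^ k) := ENNReal.ofReal_le_ofReal hfinal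
    _ = ENNReal.ofReal K * ENNReal.ofReal (r / ρ) ^ k := by
        rw [ENNReal.ofReal_mul (by positivity), ENNReal.ofReal_pow hrρ]
end
end

section
/- Let A, B ⊂ ℝⁿ be Borel sets and g ∈ O(n) a fixed orthogonal transformation, and suppose dim_H(A × B) ≥ n. Then for Lebesgue-almost every z ∈ ℝⁿ, dim_H(A ∩ (g(B) + z)) ≤ dim_H(A × B) − n. -/
open MeasureTheory Metric Set Function
open scoped ENNReal NNReal Topology

noncomputable section

/-! ### Auxiliary lemmas -/

/-- The action of an orthogonal matrix is an isometry. -/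
lemma act_isometry {n : ℕ} (g : On n) : Isometry (act g) := by
  set L : En n →ₗ[ℝ] En n := Matrix.toEuclideanLin ((g : Matrix (Fin n) (Fin n) ℝ))
  have hadj : ∀ x : En n, (LinearMap.adjoint L) (L x) = x := by
    intro x
    have h1 : Matrix.toEuclideanLin ((g : Matrix (Fin n) (Fin n) ℝ)).conjTranspose
        = LinearMap.adjoint L :=
      Matrix.toEuclideanLin_conjTranspose_eq_adjoint _
    rw [← h1]
    have h2 : ((g : Matrix (Fin n) (Fin n) ℝ)).conjTranspose * (g : Matrix (Fin n) (Fin n) ℝ)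
        = 1 := by
      rw [← Matrix.star_eq_conjTranspose]
      exact Matrix.UnitaryGroup.star_mul_self g
    simp only [L, Matrix.toEuclideanLin_apply, Equiv.apply_symm_apply,
      Matrix.mulVec_mulVec, h2, Matrix.one_mulVec, Equiv.symm_apply_apply]
  have hinner : ∀ x y : En n, (inner ℝ (L x) (L y) : ℝ) = inner ℝ x y := by
    intro x y
    rw [← LinearMap.adjoint_inner_left, hadj]
  have hnorm : ∀ x : En n, ‖L x‖ = ‖x‖ := by
    intro x
    have h3 := hinner x x
    rw [real_inner_self_eq_norm_mul_norm, real_inner_self_eq_norm_mul_norm] at h3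
    nlinarith [norm_nonneg (L x), norm_nonneg x]
  have : Isometry (⇑L) := AddMonoidHomClass.isometry_of_norm L hnorm
  exact this

/-- Any set in `ℝⁿ` has volume at most `diam ^ n`. -/
lemma En.volume_le_diam_pow {n : ℕ} (Z : Set (En n)) :
    volume Z ≤ EMetric.diam Z ^ n := by
  set e := (MeasurableEquiv.toLp 2 (Fin n → ℝ)).symm
  have h1 : volume Z = volume (e '' Z) := by
    have := (EuclideanSpace.volume_preserving_symm_measurableEquiv_toLp (Fin n)).measure_preimage_emb
      (MeasurableEquiv.measurableEmbedding _) (e '' Z)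
    rw [← this]
    congr 1
    exact (Equiv.preimage_image e.toEquiv Z).symm
  rw [h1]
  calc volume (e '' Z) ≤ EMetric.diam (e '' Z) ^ Fintype.card (Fin n) :=
        Real.volume_pi_le_diam_pow _
    _ ≤ EMetric.diam Z ^ n := by
        rw [Fintype.card_fin]
        refine pow_le_pow_left₀ zero_le ?_ n
        have := (PiLp.lipschitzWith_ofLp 2 (fun _ : Fin n => ℝ)).ediam_image_le Z
        simpa [MeasurableEquiv.coe_toLp_symm, e, EMetric.diam] using this

/-- Extraction of efficient covers from null Hausdorff measure. -/
lemma exists_good_cover {X : Type*} [EMetricSpace X] [MeasurableSpace X] [BorelSpace X]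
    {S : Set X} {d : ℝ} (hS : μH[d] S = 0) {r ε : ℝ≥0∞} (hr : 0 < r) (hε : 0 < ε) :
    ∃ U : ℕ → Set X, S ⊆ ⋃ i, U i ∧ (∀ i, EMetric.diam (U i) ≤ r) ∧
      (∑' i, ⨆ _ : (U i).Nonempty, EMetric.diam (U i) ^ d) ≤ ε := by
  have happly := Measure.hausdorffMeasure_apply d S
  rw [hS] at happly
  have h2 : (⨅ (t : ℕ → Set X) (_ : S ⊆ ⋃ m, t m) (_ : ∀ m, EMetric.diam (t m) ≤ r),
      ∑' m, ⨆ _ : (t m).Nonempty, EMetric.diam (t m) ^ d) = 0 := by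
    refine le_antisymm ?_ zero_le
    rw [happly]
    exact le_iSup₂ (f := fun r (_ : 0 < r) =>
      ⨅ (t : ℕ → Set X) (_ : S ⊆ ⋃ m, t m) (_ : ∀ m, EMetric.diam (t m) ≤ r),
        ∑' m, ⨆ _ : (t m).Nonempty, EMetric.diam (t m) ^ d) r hr
  have h3 : (⨅ (t : ℕ → Set X) (_ : S ⊆ ⋃ m, t m) (_ : ∀ m, EMetric.diam (t m) ≤ r),
      ∑' m, ⨆ _ : (t m).Nonempty, EMetric.diam (t m) ^ d) < ε := h2 ▸ hε
  obtain ⟨U, hU⟩ := iInf_lt_iff.1 h3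
  obtain ⟨hUcov, hU⟩ := iInf_lt_iff.1 hU
  obtain ⟨hUdiam, hU⟩ := iInf_lt_iff.1 hU
  exact ⟨U, hUcov, hUdiam, hU.le⟩

/-- Slice representation of the intersection. -/
lemma slice_eq {n : ℕ} (g : On n) (A B : Set (En n)) (z : En n) :
    A ∩ ((fun b => act g b + z) '' B) =
      Prod.fst '' ((A ×ˢ (act g '' B)) ∩ {p : En n × En n | p.1 = p.2 + z}) := by
  ext x
  simp only [mem_inter_iff, mem_image, mem_prod, mem_setOf_eq, Prod.exists]
  constructor
  · rintro ⟨hxA, b, hb, rfl⟩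
    exact ⟨act g b + z, act g b, ⟨⟨hxA, ⟨b, hb, rfl⟩⟩, rfl⟩, rfl⟩
  · rintro ⟨p1, p2, ⟨⟨h1, y, hy, rfl⟩, hpz⟩, rfl⟩
    exact ⟨h1, y, hy, hpz.symm⟩

/-- The key slicing estimate: if `μH^{t+n} S = 0` then almost every diagonal slice of `S`
has `μH^t` zero. -/
lemma slicing {n : ℕ} (S : Set (En n × En n)) (t : ℝ≥0) (ht : 0 < t)
    (hS : μH[(t : ℝ) + (n : ℝ)] S = 0) :
    ∀ᵐ z ∂(volume : Measure (En n)),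
      μH[(t : ℝ)] (Prod.fst '' (S ∩ {p : En n × En n | p.1 = p.2 + z})) = 0 := by
  have htn : (0 : ℝ) < (t : ℝ) + n := by positivity
  -- it suffices to show each superlevel set is null
  have main : ∀ c : ℝ≥0∞, c ≠ 0 → c ≠ ∞ →
      volume {z : En n |
        c ≤ μH[(t : ℝ)] (Prod.fst '' (S ∩ {p : En n × En n | p.1 = p.2 + z}))} = 0 := by
    intro c hc hc'
    refine le_antisymm ?_ zero_le
    refine ENNReal.le_of_forall_pos_le_add fun η hη _ => ?_
    rw [zero_add]
    set ε : ℝ≥0∞ := c * η with hεdef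
    have hε : ε ≠ 0 := mul_ne_zero hc (by exact_mod_cast hη.ne')
    have h2n : ((2 : ℝ≥0∞) ^ n) ≠ 0 := by positivity
    have h2n' : ((2 : ℝ≥0∞) ^ n) ≠ ∞ := by
      exact ENNReal.pow_ne_top (by norm_num)
    obtain ⟨δ, hδ0, hδsum⟩ := ENNReal.exists_pos_sum_of_countable
      (show ε / 2 ^ n ≠ 0 by
        simp only [ne_eq, ENNReal.div_eq_zero_iff, h2n', or_false]
        exact hε) ℕ
    -- choose covers at every scale
    choose U hUcov hUdiam hUsum using fun m : ℕ =>
      exists_good_cover (X := En n × En n) hS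
        (r := ((m : ℝ≥0∞) + 1)⁻¹) (ε := (δ m : ℝ≥0∞))
        (ENNReal.inv_pos.2 (ENNReal.add_ne_top.2 ⟨ENNReal.natCast_ne_top m, ENNReal.one_ne_top⟩))
        (ENNReal.coe_pos.2 (hδ0 m))
    set W : ℕ → ℕ → Set (En n) := fun m i =>
      closure ((fun p : En n × En n => p.1 - p.2) '' U m i) with hW
    have hWmeas : ∀ m i, MeasurableSet (W m i) := by
      intro m i
      rw [hW]
      exact isClosed_closure.measurableSet
    set F : En n → ℝ≥0∞ := fun z => ∑' p : ℕ × ℕ,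
      (W p.1 p.2).indicator (fun _ => EMetric.diam (U p.1 p.2) ^ (t : ℝ)) z with hF
    have hFmeas : Measurable F :=
      Measurable.ennreal_tsum fun p =>
        measurable_const.indicator (hWmeas p.1 p.2)
    -- diameter bound for W
    have hWdiam : ∀ m i, EMetric.diam (W m i) ≤ 2 * EMetric.diam (U m i) := by
      intro m i
      rw [hW]
      simp only [EMetric.diam, Metric.ediam_closure]
      have hsub : LipschitzWith 2 (fun p : En n × En n => p.1 - p.2) :=
        SeminormedAddCommGroup.lipschitzWith_sub
      have := hsub.ediam_image_le (U m i)
      simpa using this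
    have hWvol : ∀ m i, volume (W m i) ≤ 2 ^ n * EMetric.diam (U m i) ^ (n : ℝ) := by
      intro m i
      calc volume (W m i) ≤ EMetric.diam (W m i) ^ n := En.volume_le_diam_pow _
        _ ≤ (2 * EMetric.diam (U m i)) ^ n := pow_le_pow_left₀ zero_le (hWdiam m i) n
        _ = 2 ^ n * EMetric.diam (U m i) ^ n := mul_pow _ _ _
        _ = 2 ^ n * EMetric.diam (U m i) ^ (n : ℝ) := by rw [ENNReal.rpow_natCast]
    -- integral bound
    have hint : ∫⁻ z, F z ∂(volume : Measure (En n)) ≤ ε := by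
      have hFeq : ∫⁻ z, F z ∂(volume : Measure (En n)) = ∑' p : ℕ × ℕ,
          ∫⁻ z, (W p.1 p.2).indicator
            (fun _ => EMetric.diam (U p.1 p.2) ^ (t : ℝ)) z ∂volume :=
        lintegral_tsum fun p =>
          (measurable_const.indicator (hWmeas p.1 p.2)).aemeasurable
      rw [hFeq]
      have hterm : ∀ p : ℕ × ℕ,
          (∫⁻ z, (W p.1 p.2).indicator
            (fun _ => EMetric.diam (U p.1 p.2) ^ (t : ℝ)) z ∂volume)
            ≤ 2 ^ n * EMetric.diam (U p.1 p.2) ^ ((t : ℝ) + n) := by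
        intro p
        rw [lintegral_indicator_const (hWmeas p.1 p.2)]
        calc EMetric.diam (U p.1 p.2) ^ (t : ℝ) * volume (W p.1 p.2)
            ≤ EMetric.diam (U p.1 p.2) ^ (t : ℝ) *
              (2 ^ n * EMetric.diam (U p.1 p.2) ^ (n : ℝ)) :=
              mul_le_mul_right (hWvol p.1 p.2) _
          _ = 2 ^ n * EMetric.diam (U p.1 p.2) ^ ((t : ℝ) + n) := by
              rw [ENNReal.rpow_add_of_nonneg _ _ t.coe_nonneg (Nat.cast_nonneg n)]
              ring
      calc (∑' p : ℕ × ℕ, ∫⁻ z, (W p.1 p.2).indicator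
            (fun _ => EMetric.diam (U p.1 p.2) ^ (t : ℝ)) z ∂volume)
          ≤ ∑' p : ℕ × ℕ, 2 ^ n * EMetric.diam (U p.1 p.2) ^ ((t : ℝ) + n) :=
            ENNReal.tsum_le_tsum hterm
        _ = 2 ^ n * ∑' p : ℕ × ℕ, EMetric.diam (U p.1 p.2) ^ ((t : ℝ) + n) :=
            ENNReal.tsum_mul_left
        _ = 2 ^ n * ∑' m : ℕ, ∑' i : ℕ, EMetric.diam (U m i) ^ ((t : ℝ) + n) := by
            rw [ENNReal.tsum_prod (f := fun m i => EMetric.diam (U m i) ^ ((t : ℝ) + n))]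
        _ ≤ 2 ^ n * ∑' m : ℕ, (δ m : ℝ≥0∞) := by
            refine mul_le_mul_right (ENNReal.tsum_le_tsum fun m => ?_) _
            refine le_trans (le_of_eq ?_) (hUsum m)
            refine tsum_congr fun i => ?_
            rcases (U m i).eq_empty_or_nonempty with hemp | hne
            · simp [hemp, ENNReal.zero_rpow_of_pos htn, EMetric.diam, htn]
            · rw [iSup_pos hne]
        _ ≤ 2 ^ n * (ε / 2 ^ n) := mul_le_mul_right hδsum.le _
        _ = ε := ENNReal.mul_div_cancel h2n h2n'
    -- pointwise bound: μH^t of the slice is at most F z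
    have hkey : ∀ z : En n,
        μH[(t : ℝ)] (Prod.fst '' (S ∩ {p : En n × En n | p.1 = p.2 + z})) ≤ F z := by
      intro z
      rw [Measure.hausdorffMeasure_apply]
      refine iSup₂_le fun r hr => ?_
      obtain ⟨m, hm⟩ := ENNReal.exists_inv_nat_lt hr.ne'
      have hmr : ((m : ℝ≥0∞) + 1)⁻¹ ≤ r := by
        refine le_trans ?_ hm.le
        exact ENNReal.inv_le_inv' (le_add_of_nonneg_right zero_le_one)
      have hcov : Prod.fst '' (S ∩ {p : En n × En n | p.1 = p.2 + z}) ⊆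
          ⋃ i, Prod.fst '' (U m i ∩ {p : En n × En n | p.1 = p.2 + z}) := by
        rw [← image_iUnion, ← iUnion_inter]
        exact image_mono (inter_subset_inter_left _ (hUcov m))
      have hdiam : ∀ i, EMetric.diam
          (Prod.fst '' (U m i ∩ {p : En n × En n | p.1 = p.2 + z})) ≤ r := by
        intro i
        refine le_trans ?_ (le_trans (hUdiam m i) hmr)
        have h1 := (LipschitzWith.prod_fst (α := En n) (β := En n)).ediam_image_le
          (U m i ∩ {p : En n × En n | p.1 = p.2 + z})
        simp only [ENNReal.coe_one, one_mul] at h1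
        exact h1.trans (EMetric.diam_mono inter_subset_left)
      refine le_trans (iInf_le_of_le
        (fun i => Prod.fst '' (U m i ∩ {p : En n × En n | p.1 = p.2 + z}))
        (iInf_le_of_le hcov (iInf_le_of_le hdiam le_rfl))) ?_
      have hptwise : ∀ i : ℕ,
          (⨆ _ : (Prod.fst '' (U m i ∩ {p : En n × En n | p.1 = p.2 + z})).Nonempty,
            EMetric.diam (Prod.fst '' (U m i ∩ {p : En n × En n | p.1 = p.2 + z})) ^ (t : ℝ))
          ≤ (W m i).indicator (fun _ => EMetric.diam (U m i) ^ (t : ℝ)) z := by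
        intro i
        refine iSup_le fun hne => ?_
        obtain ⟨x, p, ⟨hpU, hpV⟩, rfl⟩ := hne
        have hzW : z ∈ W m i := by
          rw [hW]
          refine subset_closure ⟨p, hpU, ?_⟩
          simp only [mem_setOf_eq] at hpV
          show p.1 - p.2 = z
          rw [hpV]
          abel
        rw [indicator_of_mem hzW]
        refine ENNReal.rpow_le_rpow ?_ t.coe_nonneg
        have h2 := (LipschitzWith.prod_fst (α := En n) (β := En n)).ediam_image_le
          (U m i ∩ {p : En n × En n | p.1 = p.2 + z})
        simp only [ENNReal.coe_one, one_mul] at h2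
        exact h2.trans (EMetric.diam_mono inter_subset_left)
      refine le_trans (ENNReal.tsum_le_tsum hptwise) ?_
      exact ENNReal.tsum_comp_le_tsum_of_injective
        (f := fun i : ℕ => ((m, i) : ℕ × ℕ)) (fun a b hab => congrArg Prod.snd hab)
        (fun p => (W p.1 p.2).indicator (fun _ => EMetric.diam (U p.1 p.2) ^ (t : ℝ)) z)
    -- Markov inequality
    calc volume {z : En n |
          c ≤ μH[(t : ℝ)] (Prod.fst '' (S ∩ {p : En n × En n | p.1 = p.2 + z}))}
        ≤ volume {z : En n | c ≤ F z} :=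
          measure_mono (fun z hz => le_trans hz (hkey z))
      _ ≤ (∫⁻ z, F z ∂volume) / c :=
          meas_ge_le_lintegral_div hFmeas.aemeasurable hc hc'
      _ ≤ ε / c := by gcongr
      _ = η := by
          rw [hεdef, mul_comm, mul_div_assoc, ENNReal.div_self hc hc', mul_one]
  -- combine over c = (k+1)⁻¹
  rw [ae_iff]
  have hsubset : {z : En n |
      ¬ μH[(t : ℝ)] (Prod.fst '' (S ∩ {p : En n × En n | p.1 = p.2 + z})) = 0} ⊆
      ⋃ k : ℕ, {z : En n |
        ((k : ℝ≥0∞) + 1)⁻¹ ≤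
          μH[(t : ℝ)] (Prod.fst '' (S ∩ {p : En n × En n | p.1 = p.2 + z}))} := by
    intro z hz
    simp only [mem_setOf_eq] at hz
    have hpos : 0 < μH[(t : ℝ)] (Prod.fst '' (S ∩ {p : En n × En n | p.1 = p.2 + z})) :=
      pos_iff_ne_zero.2 hz
    obtain ⟨k, hk⟩ := ENNReal.exists_inv_nat_lt hpos.ne'
    refine mem_iUnion.2 ⟨k, ?_⟩
    simp only [mem_setOf_eq]
    refine le_trans ?_ hk.le
    exact ENNReal.inv_le_inv' (le_add_of_nonneg_right zero_le_one)
  refine measure_mono_null hsubset ?_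
  refine measure_iUnion_null fun k => ?_
  exact main ((k : ℝ≥0∞) + 1)⁻¹
    (ENNReal.inv_ne_zero.2 (ENNReal.add_ne_top.2 ⟨ENNReal.natCast_ne_top k, ENNReal.one_ne_top⟩))
    (ENNReal.inv_ne_top.2 (by simp))

/-- For Borel `A, B ⊆ ℝⁿ` and fixed `g ∈ O(n)` with `dimH (A × B) ≥ n`, for a.e. `z`,
`dimH (A ∩ (g(B)+z)) ≤ dimH (A × B) - n`. -/
theorem stmt1 (n : ℕ) (A B : Set (En n)) (hA : MeasurableSet A) (hB : MeasurableSet B)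
    (g : On n) (h : (n : ℝ≥0∞) ≤ dimH (A ×ˢ B)) :
    ∀ᵐ z ∂(volume : Measure (En n)),
      dimH (A ∩ ((fun b => act g b + z) '' B)) ≤ dimH (A ×ˢ B) - n := by
  classical
  have hgiso : Isometry (act g) := act_isometry g
  have hdim : dimH (A ×ˢ (act g '' B)) = dimH (A ×ˢ B) := by
    have himg : A ×ˢ (act g '' B) =
        (fun p : En n × En n => (p.1, act g p.2)) '' (A ×ˢ B) := by
      have := Set.prod_image_image_eq (s := A) (t := B) (m₁ := (id : En n → En n))
        (m₂ := act g)
      simpa using this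
    rw [himg]
    exact (isometry_id.prodMap hgiso).dimH_image _
  rcases eq_top_or_lt_top (dimH (A ×ˢ B)) with htop | hfin
  · filter_upwards with z
    rw [htop]
    rw [show ((n : ℝ≥0∞)) = ((n : ℝ≥0) : ℝ≥0∞) by simp, ENNReal.top_sub_coe]
    exact le_top
  · set D := dimH (A ×ˢ B) - n with hD
    have hDne : D ≠ ⊤ := (tsub_le_self.trans_lt hfin).ne
    have hDn : D + n = dimH (A ×ˢ B) := tsub_add_cancel_of_le h
    have key : ∀ k : ℕ, ∀ᵐ z ∂(volume : Measure (En n)),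
        dimH (A ∩ ((fun b => act g b + z) '' B)) ≤ D + ((k : ℝ≥0∞) + 1)⁻¹ := by
      intro k
      set t : ℝ≥0 := D.toNNReal + ((k : ℝ≥0) + 1)⁻¹ with htdef
      have htpos : 0 < t := by
        rw [htdef]
        have hpos : (0 : ℝ≥0) < ((k : ℝ≥0) + 1)⁻¹ := by
          rw [inv_pos]
          positivity
        exact lt_of_lt_of_le hpos le_add_self
      have hcoe : (t : ℝ≥0∞) = D + ((k : ℝ≥0∞) + 1)⁻¹ := by
        rw [htdef]
        push_cast
        rw [ENNReal.coe_toNNReal hDne,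
          ENNReal.coe_inv (by exact (show (0:ℝ≥0) < (k:ℝ≥0)+1 by positivity).ne')]
        push_cast
        ring_nf
      have hmeas : μH[(t : ℝ) + (n : ℝ)] (A ×ˢ (act g '' B)) = 0 := by
        have hlt : dimH (A ×ˢ (act g '' B)) < ((t + n : ℝ≥0) : ℝ≥0∞) := by
          rw [hdim, ← hDn]
          push_cast
          rw [hcoe]
          have h1 : D < D + ((k : ℝ≥0∞) + 1)⁻¹ :=
            ENNReal.lt_add_right hDne
              (ENNReal.inv_ne_zero.2
                (ENNReal.add_ne_top.2 ⟨ENNReal.natCast_ne_top k, ENNReal.one_ne_top⟩))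
          exact ENNReal.add_lt_add_right (ENNReal.natCast_ne_top n) h1
        have h0 := hausdorffMeasure_of_dimH_lt hlt
        convert h0 using 2
        all_goals
          push_cast
          try ring
      have hz := slicing (A ×ˢ (act g '' B)) t htpos hmeas
      filter_upwards [hz] with z hz'
      rw [slice_eq g A B z]
      refine le_trans (dimH_le_of_hausdorffMeasure_ne_top (by rw [hz']; simp)) ?_
      rw [hcoe]
    have hall := (ae_all_iff).2 key
    filter_upwards [hall] with z hz
    refine ENNReal.le_of_forall_pos_le_add fun ε hε _ => ?_
    obtain ⟨m, hm⟩ := ENNReal.exists_inv_nat_lt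
      (show ((ε : ℝ≥0∞)) ≠ 0 by exact_mod_cast hε.ne')
    refine le_trans (hz m) ?_
    refine add_le_add_right ?_ _
    refine le_trans ?_ hm.le
    exact ENNReal.inv_le_inv' (le_add_of_nonneg_right zero_le_one)
end
end

section
/- For every 0 ≤ s ≤ 1 there exist compact sets A, B ⊂ ℝ with dim_H A = dim_H B = 1 such that for every z ∈ ℝ the intersection A ∩ (B + z) contains at most one point. -/
open MeasureTheory Metric Set Function
open scoped ENNReal NNReal Topology

noncomputable section

namespace Keleti

def Pp : ℕ → ℕ
  | 0 => 0
  | n+1 => Pp n + (n+4)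

def Qq : ℕ → ℕ
  | 0 => 0
  | n+1 => Qq n + (n+1)

abbrev XX := (n : ℕ) → Fin (3^(n+1))

variable (o : ℕ → ℕ → ℕ)

def al (x : XX) : ℕ → ℕ
  | 0 => 0
  | n+1 => 3^(n+4) * al x n + (o n (al x n) % 3 + 3 * (x n : ℕ))

def sd (x : XX) (n : ℕ) : ℕ := o n (al o x n) % 3 + 3 * (x n : ℕ)

lemma al_zero (x : XX) : al o x 0 = 0 := rfl

lemma al_succ (x : XX) (n : ℕ) :
    al o x (n+1) = 3^(n+4) * al o x n + sd o x n := rfl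

def term (x : XX) (n : ℕ) : ℝ := (sd o x n : ℝ) / 3 ^ Pp (n+1)

def Phi (x : XX) : ℝ := ∑' n, term o x n

def Psi (x : XX) : ℝ := ∑' n, (x n : ℝ) / 3 ^ Qq (n+1)

lemma sd_lt (x : XX) (n : ℕ) : sd o x n < 3^(n+2) := by
  have h1 : o n (al o x n) % 3 < 3 := Nat.mod_lt _ (by norm_num)
  have h2 : (x n : ℕ) < 3^(n+1) := (x n).2
  have hsd : sd o x n = o n (al o x n) % 3 + 3 * (x n : ℕ) := rfl
  have h3 : (3:ℕ)^(n+2) = 3 * 3^(n+1) := by ring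
  omega

lemma Pp_zero : Pp 0 = 0 := rfl

lemma Pp_succ (n : ℕ) : Pp (n+1) = Pp n + (n+4) := rfl

lemma Qq_zero : Qq 0 = 0 := rfl

lemma Qq_succ (n : ℕ) : Qq (n+1) = Qq n + (n+1) := rfl

lemma Pp_add_le (n m : ℕ) : Pp n + m ≤ Pp (n+m) := by
  induction m with
  | zero => simp
  | succ m ih =>
      have h2 : n + (m+1) = (n+m)+1 := rfl
      rw [h2, Pp_succ]; omega

lemma le_Pp (n : ℕ) : n ≤ Pp n := by
  have := Pp_add_le 0 n; rw [Pp_zero] at this; simpa using this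

lemma Qq_add_le (n m : ℕ) : Qq n + m ≤ Qq (n+m) := by
  induction m with
  | zero => simp
  | succ m ih =>
      have h2 : n + (m+1) = (n+m)+1 := rfl
      rw [h2, Qq_succ]; omega

lemma le_Qq (n : ℕ) : n ≤ Qq n := by
  have := Qq_add_le 0 n; rw [Qq_zero] at this; simpa using this

lemma term_nonneg (x : XX) (n : ℕ) : 0 ≤ term o x n := by
  unfold term; positivity

lemma term_le (x : XX) (n : ℕ) : term o x n ≤ ((3:ℝ) ^ Pp n)⁻¹ / 9 := by
  unfold term
  have hs : (sd o x n : ℝ) ≤ 3^(n+2) := by exact_mod_cast (sd_lt o x n).le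
  have hpow : (3:ℝ)^(n+4) = 3^(n+2)*9 := by
    rw [show n+4 = (n+2)+2 from rfl, pow_add]; norm_num
  calc (sd o x n : ℝ) / 3 ^ Pp (n+1) ≤ (3:ℝ)^(n+2) / 3 ^ Pp (n+1) := by gcongr
    _ = ((3:ℝ) ^ Pp n)⁻¹ / 9 := by
        rw [Pp_succ, pow_add (3:ℝ) (Pp n) (n+4), hpow]
        have h0 : ((3:ℝ)^Pp n) ≠ 0 := by positivity
        field_simp


lemma inv_pow3_le {m k : ℕ} (h : m ≤ k) : ((3:ℝ)^k)⁻¹ ≤ ((3:ℝ)^m)⁻¹ := by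
  apply inv_anti₀ (by positivity)
  exact pow_le_pow_right₀ (by norm_num) h

lemma inv_pow3_le_geom (n : ℕ) : ((3:ℝ)^Pp n)⁻¹ ≤ (1/3:ℝ)^n := by
  have : ((3:ℝ)^Pp n)⁻¹ ≤ ((3:ℝ)^n)⁻¹ := inv_pow3_le (le_Pp n)
  simpa [one_div, inv_pow] using this

lemma summable_term (x : XX) : Summable (term o x) := by
  apply Summable.of_nonneg_of_le (term_nonneg o x) (fun n => ?_)
    ((summable_geometric_of_lt_one (by norm_num) (by norm_num : (1/3:ℝ) < 1)))
  calc term o x n ≤ ((3:ℝ)^Pp n)⁻¹/9 := term_le o x n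
    _ ≤ ((3:ℝ)^Pp n)⁻¹ := by
        have : (0:ℝ) ≤ ((3:ℝ)^Pp n)⁻¹ := by positivity
        linarith
    _ ≤ (1/3:ℝ)^n := inv_pow3_le_geom n

lemma sum_range_term (x : XX) (n : ℕ) :
    ∑ j ∈ Finset.range n, term o x j = (al o x n : ℝ) / 3 ^ Pp n := by
  induction n with
  | zero => simp [al_zero, Pp_zero]
  | succ n ih =>
      rw [Finset.sum_range_succ, ih]
      unfold term
      rw [al_succ, Pp_succ, pow_add (3:ℝ) (Pp n) (n+4)]
      have h0 : ((3:ℝ)^Pp n) ≠ 0 := by positivity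
      have h1 : ((3:ℝ)^(n+4)) ≠ 0 := by positivity
      push_cast
      field_simp

lemma tail_le (x : XX) (n : ℕ) :
    ∑' m, term o x (n+m) ≤ ((3:ℝ) ^ Pp n)⁻¹/6 := by
  have hsum : Summable (fun m => term o x (n+m)) := by
    exact (summable_term o x).comp_injective (add_right_injective n)
  have hb : ∀ m, term o x (n+m) ≤ ((3:ℝ)^Pp n)⁻¹/9 * (1/3)^m := by
    intro m
    calc term o x (n+m) ≤ ((3:ℝ)^Pp (n+m))⁻¹/9 := term_le o x (n+m)
      _ ≤ ((3:ℝ)^(Pp n + m))⁻¹/9 := by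
          have := inv_pow3_le (Pp_add_le n m); linarith
      _ = ((3:ℝ)^Pp n)⁻¹/9 * (1/3)^m := by
          rw [pow_add]
          rw [mul_inv]
          rw [one_div, inv_pow]
          ring
  have hsum2 : Summable (fun m : ℕ => ((3:ℝ)^Pp n)⁻¹/9 * (1/3)^m) :=
    (summable_geometric_of_lt_one (by norm_num) (by norm_num : (1/3:ℝ) < 1)).mul_left _
  calc ∑' m, term o x (n+m) ≤ ∑' m : ℕ, ((3:ℝ)^Pp n)⁻¹/9 * (1/3)^m :=
        Summable.tsum_le_tsum hb hsum hsum2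
    _ = ((3:ℝ)^Pp n)⁻¹/9 * (1 - 1/3)⁻¹ := by
        rw [tsum_mul_left, tsum_geometric_of_lt_one (by norm_num) (by norm_num)]
    _ = ((3:ℝ)^Pp n)⁻¹/6 := by ring

lemma tail_nonneg (x : XX) (n : ℕ) : 0 ≤ ∑' m, term o x (n+m) :=
  tsum_nonneg (fun m => term_nonneg o x (n+m))

lemma Phi_eq (x : XX) (n : ℕ) :
    Phi o x = (al o x n : ℝ) / 3 ^ Pp n + ∑' m, term o x (n+m) := by
  unfold Phi
  rw [← Summable.sum_add_tsum_nat_add n (summable_term o x), sum_range_term o x n]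
  congr 1
  exact tsum_congr (fun m => by rw [add_comm])

lemma Phi_lb (x : XX) (n : ℕ) : (al o x n : ℝ) / 3 ^ Pp n ≤ Phi o x := by
  rw [Phi_eq o x n]
  have := tail_nonneg o x n; linarith

lemma Phi_ub (x : XX) (n : ℕ) :
    Phi o x ≤ (al o x n : ℝ) / 3 ^ Pp n + ((3:ℝ)^Pp n)⁻¹/6 := by
  rw [Phi_eq o x n]
  have := tail_le o x n; linarith


def pterm (x : XX) (n : ℕ) : ℝ := ((x n : ℕ) : ℝ) / 3 ^ Qq (n+1)

lemma Psi_eq_tsum (x : XX) : Psi x = ∑' n, pterm x n := rfl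

lemma pterm_nonneg (x : XX) (n : ℕ) : 0 ≤ pterm x n := by unfold pterm; positivity

lemma pterm_le (x : XX) (n : ℕ) : pterm x n ≤ ((3:ℝ) ^ Qq n)⁻¹ := by
  unfold pterm
  have hx : ((x n : ℕ) : ℝ) ≤ 3^(n+1) := by
    have := (x n).2; exact_mod_cast this.le
  rw [Qq_succ, pow_add (3:ℝ) (Qq n) (n+1)]
  rw [div_le_iff₀ (by positivity)]
  calc ((x n : ℕ) : ℝ) ≤ 3^(n+1) := hx
    _ = ((3:ℝ) ^ Qq n)⁻¹ * (3 ^ Qq n * 3 ^ (n + 1)) := by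
        field_simp

lemma summable_pterm (x : XX) : Summable (pterm x) := by
  apply Summable.of_nonneg_of_le (pterm_nonneg x) (fun n => ?_)
    ((summable_geometric_of_lt_one (by norm_num) (by norm_num : (1/3:ℝ) < 1)))
  calc pterm x n ≤ ((3:ℝ)^Qq n)⁻¹ := pterm_le x n
    _ ≤ ((3:ℝ)^n)⁻¹ := inv_pow3_le (le_Qq n)
    _ = (1/3:ℝ)^n := by rw [one_div, inv_pow]

lemma psi_diff (x y : XX) (m : ℕ) (hpre : ∀ j, j < m → x j = y j) :
    |Psi x - Psi y| ≤ (3/2) * ((3:ℝ) ^ Qq m)⁻¹ := by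
  have hx := Summable.sum_add_tsum_nat_add m (summable_pterm x)
  have hy := Summable.sum_add_tsum_nat_add m (summable_pterm y)
  have hpresum : ∑ j ∈ Finset.range m, pterm x j = ∑ j ∈ Finset.range m, pterm y j := by
    apply Finset.sum_congr rfl
    intro j hj
    unfold pterm
    rw [hpre j (Finset.mem_range.mp hj)]
  have hdiff : Psi x - Psi y = (∑' j, pterm x (j+m)) - ∑' j, pterm y (j+m) := by
    rw [Psi_eq_tsum, Psi_eq_tsum, ← hx, ← hy, hpresum]; ring
  rw [hdiff]
  have hsx : Summable (fun j => pterm x (j+m)) := (summable_nat_add_iff m).2 (summable_pterm x)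
  have hsy : Summable (fun j => pterm y (j+m)) := (summable_nat_add_iff m).2 (summable_pterm y)
  have hbound : ∀ j : ℕ, |pterm x (j+m) - pterm y (j+m)| ≤ ((3:ℝ)^Qq m)⁻¹ * (1/3)^j := by
    intro j
    have h1 : pterm x (j+m) ≤ ((3:ℝ)^Qq m)⁻¹ * (1/3)^j := by
      calc pterm x (j+m) ≤ ((3:ℝ)^Qq (j+m))⁻¹ := pterm_le x (j+m)
        _ ≤ ((3:ℝ)^(Qq m + j))⁻¹ := by
            rw [show j + m = m + j from by omega]
            exact inv_pow3_le (Qq_add_le m j)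
        _ = ((3:ℝ)^Qq m)⁻¹ * (1/3)^j := by
            rw [pow_add, mul_inv, one_div, inv_pow]
    have h2 : pterm y (j+m) ≤ ((3:ℝ)^Qq m)⁻¹ * (1/3)^j := by
      calc pterm y (j+m) ≤ ((3:ℝ)^Qq (j+m))⁻¹ := pterm_le y (j+m)
        _ ≤ ((3:ℝ)^(Qq m + j))⁻¹ := by
            rw [show j + m = m + j from by omega]
            exact inv_pow3_le (Qq_add_le m j)
        _ = ((3:ℝ)^Qq m)⁻¹ * (1/3)^j := by
            rw [pow_add, mul_inv, one_div, inv_pow]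
    have h3 := pterm_nonneg x (j+m)
    have h4 := pterm_nonneg y (j+m)
    rw [abs_le]; constructor <;> linarith
  have hgeom : Summable (fun j : ℕ => ((3:ℝ)^Qq m)⁻¹ * (1/3)^j) :=
    (summable_geometric_of_lt_one (by norm_num) (by norm_num : (1/3:ℝ) < 1)).mul_left _
  calc |(∑' j, pterm x (j+m)) - ∑' j, pterm y (j+m)|
      = |∑' j, (pterm x (j+m) - pterm y (j+m))| := by rw [Summable.tsum_sub hsx hsy]
    _ ≤ ∑' j, |pterm x (j+m) - pterm y (j+m)| := by
        have hsabs : Summable (fun j => |pterm x (j+m) - pterm y (j+m)|) :=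
          Summable.of_nonneg_of_le (fun j => abs_nonneg _) hbound hgeom
        simpa [Real.norm_eq_abs] using norm_tsum_le_tsum_norm (f := fun j => pterm x (j+m) - pterm y (j+m)) hsabs
    _ ≤ ∑' j : ℕ, ((3:ℝ)^Qq m)⁻¹ * (1/3)^j := by
        apply Summable.tsum_le_tsum hbound _ hgeom
        apply Summable.of_nonneg_of_le (fun j => abs_nonneg _) hbound hgeom
    _ = ((3:ℝ)^Qq m)⁻¹ * (1-1/3)⁻¹ := by
        rw [tsum_mul_left, tsum_geometric_of_lt_one (by norm_num) (by norm_num)]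
    _ = (3/2) * ((3:ℝ)^Qq m)⁻¹ := by ring

lemma al_congr (x y : XX) (n : ℕ) (h : ∀ j, j < n → x j = y j) :
    al o x n = al o y n := by
  induction n with
  | zero => rfl
  | succ n ih =>
      have h1 : al o x n = al o y n := ih (fun j hj => h j (by omega))
      show 3^(n+4) * al o x n + (o n (al o x n) % 3 + 3 * (x n : ℕ)) =
        3^(n+4) * al o y n + (o n (al o y n) % 3 + 3 * (y n : ℕ))
      rw [h1, h n (by omega)]

lemma phi_sep (x y : XX) (m : ℕ) (hpre : ∀ j, j < m → x j = y j) (hne : x m ≠ y m) :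
    ((3:ℝ) ^ Pp (m+1))⁻¹ ≤ |Phi o x - Phi o y| := by
  have hal : al o x m = al o y m := al_congr o x y m hpre
  have hdig : (al o x (m+1) : ℝ) - (al o y (m+1) : ℝ) =
      3 * (((x m : ℕ) : ℝ) - ((y m : ℕ) : ℝ)) := by
    rw [al_succ, al_succ]
    unfold sd
    rw [hal]
    push_cast
    ring
  have hxy : ((x m : ℕ) : ℝ) - ((y m : ℕ) : ℝ) ≠ 0 := by
    intro h
    apply hne
    have : (x m : ℕ) = (y m : ℕ) := by exact_mod_cast sub_eq_zero.mp h
    exact Fin.ext this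
  have habs : (3:ℝ) ≤ |(al o x (m+1) : ℝ) - (al o y (m+1) : ℝ)| := by
    rw [hdig, abs_mul]
    have : (1:ℝ) ≤ |((x m : ℕ) : ℝ) - ((y m : ℕ) : ℝ)| := by
      have h1 : ((x m : ℕ) : ℤ) - ((y m : ℕ) : ℤ) ≠ 0 := by
        intro h; apply hxy; exact_mod_cast h
      have h2 : (1:ℤ) ≤ |((x m : ℕ) : ℤ) - ((y m : ℕ) : ℤ)| := by
        have := abs_pos.mpr h1; omega
      have h3 : ((|((x m : ℕ) : ℤ) - ((y m : ℕ) : ℤ)| : ℤ) : ℝ) =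
          |((x m : ℕ) : ℝ) - ((y m : ℕ) : ℝ)| := by push_cast; simp
      rw [← h3]; exact_mod_cast h2
    calc (3:ℝ) = 3 * 1 := by ring
      _ ≤ |(3:ℝ)| * |((x m : ℕ) : ℝ) - ((y m : ℕ) : ℝ)| := by
          rw [abs_of_pos (by norm_num : (0:ℝ) < 3)]
          nlinarith
  -- now use Phi_eq at level m+1
  set c := ((3:ℝ) ^ Pp (m+1))⁻¹ with hc
  have hcpos : 0 < c := by rw [hc]; positivity
  have hex := Phi_eq o x (m+1)
  have hey := Phi_eq o y (m+1)
  have htx1 := tail_nonneg o x (m+1)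
  have htx2 := tail_le o x (m+1)
  have hty1 := tail_nonneg o y (m+1)
  have hty2 := tail_le o y (m+1)
  have hdiffeq : Phi o x - Phi o y = ((al o x (m+1) : ℝ) - (al o y (m+1) : ℝ)) * c
      + ((∑' k, term o x (m+1+k)) - ∑' k, term o y (m+1+k)) := by
    rw [hex, hey, hc]
    field_simp
    ring
  have hmain : 3 * c - c/3 ≤ |Phi o x - Phi o y| := by
    rw [hdiffeq]
    have h1 : |((al o x (m+1) : ℝ) - (al o y (m+1) : ℝ)) * c| ≥ 3 * c := by
      rw [abs_mul, abs_of_pos hcpos]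
      nlinarith
    have h2 : |(∑' k, term o x (m+1+k)) - ∑' k, term o y (m+1+k)| ≤ c/6 * 2 := by
      rw [abs_le]
      constructor <;> [linarith [htx1, hty2]; linarith [htx2, hty1]]
    calc 3*c - c/3 ≤ |((al o x (m+1) : ℝ) - (al o y (m+1) : ℝ)) * c|
          - |(∑' k, term o x (m+1+k)) - ∑' k, term o y (m+1+k)| := by linarith
      _ ≤ |((al o x (m+1) : ℝ) - (al o y (m+1) : ℝ)) * c
          + ((∑' k, term o x (m+1+k)) - ∑' k, term o y (m+1+k))| := by
          have := abs_add_le (((al o x (m+1) : ℝ) - (al o y (m+1) : ℝ)) * c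
            + ((∑' k, term o x (m+1+k)) - ∑' k, term o y (m+1+k)))
            (-((∑' k, term o x (m+1+k)) - ∑' k, term o y (m+1+k)))
          simp only [abs_neg] at this
          have h4 : ((al o x (m+1) : ℝ) - (al o y (m+1) : ℝ)) * c
            + ((∑' k, term o x (m+1+k)) - ∑' k, term o y (m+1+k))
            + -((∑' k, term o x (m+1+k)) - ∑' k, term o y (m+1+k))
            = ((al o x (m+1) : ℝ) - (al o y (m+1) : ℝ)) * c := by ring
          rw [h4] at this
          linarith
  calc c ≤ 3*c - c/3 := by linarith
    _ ≤ |Phi o x - Phi o y| := hmain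

lemma phi_injective : Function.Injective (Phi o) := by
  intro x y hxy
  by_contra hne
  have hex : ∃ n, x n ≠ y n := by
    by_contra h
    push_neg at h
    exact hne (funext h)
  classical
  let m := Nat.find hex
  have hm : x m ≠ y m := Nat.find_spec hex
  have hpre : ∀ j, j < m → x j = y j := by
    intro j hj
    by_contra h
    exact absurd (Nat.find_le h : m ≤ j) (by omega)
  have hsep := phi_sep o x y m hpre hm
  rw [hxy, sub_self, abs_zero] at hsep
  have : (0:ℝ) < ((3:ℝ) ^ Pp (m+1))⁻¹ := by positivity
  linarith


lemma continuous_al (n : ℕ) : Continuous (fun x : XX => al o x n) := by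
  induction n with
  | zero => exact continuous_const
  | succ n ih =>
      have hpair : Continuous (fun x : XX => (al o x n, x n)) :=
        ih.prodMk (continuous_apply n)
      have hg : Continuous (fun p : ℕ × Fin (3^(n+1)) =>
          3^(n+4) * p.1 + (o n p.1 % 3 + 3 * (p.2 : ℕ))) :=
        continuous_of_discreteTopology
      exact hg.comp hpair

lemma continuous_term (n : ℕ) : Continuous (fun x : XX => term o x n) := by
  have hpair : Continuous (fun x : XX => (al o x n, x n)) :=
    (continuous_al o n).prodMk (continuous_apply n)
  have hg : Continuous (fun p : ℕ × Fin (3^(n+1)) =>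
      ((o n p.1 % 3 + 3 * (p.2 : ℕ) : ℕ) : ℝ) / 3 ^ Pp (n+1)) :=
    continuous_of_discreteTopology
  exact hg.comp hpair

lemma continuous_Phi : Continuous (Phi o) := by
  have hb : ∀ (n : ℕ) (x : XX), ‖term o x n‖ ≤ (1/3:ℝ)^n := by
    intro n x
    rw [Real.norm_eq_abs, abs_of_nonneg (term_nonneg o x n)]
    calc term o x n ≤ ((3:ℝ)^Pp n)⁻¹/9 := term_le o x n
      _ ≤ ((3:ℝ)^Pp n)⁻¹ := by
          have : (0:ℝ) ≤ ((3:ℝ)^Pp n)⁻¹ := by positivity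
          linarith
      _ ≤ (1/3:ℝ)^n := inv_pow3_le_geom n
  have hu : Summable (fun n : ℕ => (1/3:ℝ)^n) :=
    summable_geometric_of_lt_one (by norm_num) (by norm_num)
  have := tendstoUniformly_tsum_nat hu hb
  exact this.continuous (Filter.Frequently.of_forall (fun N =>
    continuous_finset_sum _ (fun n _ => continuous_term o n)))

/-- the greedy remainder sequence -/
def rem (c : ℝ) : ℕ → ℝ
  | 0 => c
  | n+1 => rem c n -
      (min (3^(n+1) - 1) ⌊rem c n * 3 ^ Qq (n+1)⌋₊ : ℕ) * ((3:ℝ) ^ Qq (n+1))⁻¹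

def gd (c : ℝ) (n : ℕ) : ℕ := min (3^(n+1) - 1) ⌊rem c n * 3 ^ Qq (n+1)⌋₊

lemma rem_succ (c : ℝ) (n : ℕ) :
    rem c (n+1) = rem c n - (gd c n : ℕ) * ((3:ℝ) ^ Qq (n+1))⁻¹ := rfl

def xdig (c : ℝ) : XX := fun n => ⟨gd c n, by
  have h1 : gd c n ≤ 3^(n+1) - 1 := min_le_left _ _
  have h2 : (0:ℕ) < 3^(n+1) := by positivity
  omega⟩

lemma rem_invariant (c : ℝ) (h0 : 0 ≤ c) (h1 : c ≤ 1) (n : ℕ) :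
    0 ≤ rem c n ∧ rem c n ≤ ((3:ℝ) ^ Qq n)⁻¹ := by
  induction n with
  | zero =>
      refine ⟨h0, ?_⟩
      rw [Qq_zero]; simpa [rem] using h1
  | succ n ih =>
      obtain ⟨hl, hu⟩ := ih
      rw [rem_succ]
      set E := (3:ℝ) ^ Qq (n+1) with hE
      have hQpos : (0:ℝ) < E := by rw [hE]; positivity
      have hEinv : (0:ℝ) < E⁻¹ := by positivity
      constructor
      · have hd : (gd c n : ℝ) ≤ rem c n * E := by
          calc (gd c n : ℝ) ≤ ((⌊rem c n * E⌋₊ : ℕ) : ℝ) := by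
                exact_mod_cast min_le_right _ _
            _ ≤ rem c n * E := Nat.floor_le (by positivity)
        rw [sub_nonneg]
        calc (gd c n : ℝ) * E⁻¹ ≤ (rem c n * E) * E⁻¹ := by
              apply mul_le_mul_of_nonneg_right hd hEinv.le
          _ = rem c n := by field_simp
      · rcases le_or_gt (⌊rem c n * E⌋₊) (3^(n+1) - 1) with hc | hc
        · have hgd : gd c n = ⌊rem c n * E⌋₊ := min_eq_right hc
          have hlt : rem c n * E < (⌊rem c n * E⌋₊ : ℝ) + 1 := Nat.lt_floor_add_one _
          have key : rem c n ≤ ((⌊rem c n * E⌋₊ : ℝ) + 1) * E⁻¹ := by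
            calc rem c n = (rem c n * E) * E⁻¹ := by field_simp
                _ ≤ (((⌊rem c n * E⌋₊ : ℝ) + 1)) * E⁻¹ := by
                    apply mul_le_mul_of_nonneg_right (le_of_lt (Nat.lt_floor_add_one _)) hEinv.le
          rw [hgd]
          have key2 : ((⌊rem c n * E⌋₊ : ℝ)+1)*E⁻¹ = (⌊rem c n * E⌋₊ : ℝ)*E⁻¹ + E⁻¹ := by ring
          linarith [key, key2]
        · have hgd : gd c n = 3^(n+1) - 1 := min_eq_left (le_of_lt hc)
          have hcast : ((3^(n+1) - 1 : ℕ) : ℝ) = (3:ℝ)^(n+1) - 1 := by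
            have h32 : (1:ℕ) ≤ 3^(n+1) := Nat.one_le_pow _ _ (by norm_num)
            push_cast [Nat.cast_sub h32]
            ring
          have hEsplit : (3:ℝ)^(n+1) * E⁻¹ = ((3:ℝ)^Qq n)⁻¹ := by
            rw [hE, Qq_succ, pow_add]
            field_simp
            ring
          have hr : rem c n ≤ (3:ℝ)^(n+1) * E⁻¹ := by rw [hEsplit]; exact hu
          rw [hgd, hcast]
          nlinarith
 
lemma sum_range_pterm (c : ℝ) (n : ℕ) :
    ∑ j ∈ Finset.range n, pterm (xdig c) j = c - rem c n := by
  induction n with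
  | zero => simp [rem]
  | succ n ih =>
      rw [Finset.sum_range_succ, ih, rem_succ]
      have : pterm (xdig c) n = (gd c n : ℝ) * ((3:ℝ) ^ Qq (n+1))⁻¹ := by
        unfold pterm xdig
        simp [div_eq_mul_inv]
      rw [this]; ring

lemma psi_xdig (c : ℝ) (h0 : 0 ≤ c) (h1 : c ≤ 1) : Psi (xdig c) = c := by
  have hhs : HasSum (pterm (xdig c)) (Psi (xdig c)) := (summable_pterm _).hasSum
  have hlim1 := hhs.tendsto_sum_nat
  have hrem : Filter.Tendsto (fun n => rem c n) Filter.atTop (nhds 0) := by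
    apply squeeze_zero (fun n => (rem_invariant c h0 h1 n).1)
      (fun n => le_trans (rem_invariant c h0 h1 n).2 ?_)
      (tendsto_pow_atTop_nhds_zero_of_lt_one (by norm_num) (by norm_num : (1/3:ℝ) < 1))
    calc ((3:ℝ)^Qq n)⁻¹ ≤ ((3:ℝ)^n)⁻¹ := inv_pow3_le (le_Qq n)
      _ = (1/3:ℝ)^n := by rw [one_div, inv_pow]
  have hlim2 : Filter.Tendsto (fun n => ∑ j ∈ Finset.range n, pterm (xdig c) j)
      Filter.atTop (nhds c) := by
    have : (fun n => ∑ j ∈ Finset.range n, pterm (xdig c) j) = fun n => c - rem c n := by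
      funext n; exact sum_range_pterm c n
    rw [this]
    simpa using (tendsto_const_nhds (x := c)).sub hrem
  exact tendsto_nhds_unique hlim1 hlim2


lemma two_Pp (m : ℕ) : 2 * Pp m = m * (m+7) := by
  induction m with
  | zero => rfl
  | succ m ih => rw [Pp_succ, Nat.mul_add, ih]; ring

lemma two_Qq (m : ℕ) : 2 * Qq m = m * (m+1) := by
  induction m with
  | zero => rfl
  | succ m ih => rw [Qq_succ, Nat.mul_add, ih]; ring

lemma exponent_bound (ε : ℝ) (hε : 0 < ε) (m : ℕ) :
    (1-ε) * (Pp (m+1) : ℝ) ≤ (Qq m : ℝ) + (32/ε + 4) := by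
  set p := (m:ℝ) with hp
  have hp0 : 0 ≤ p := by rw [hp]; positivity
  have hP : 2 * (Pp (m+1) : ℝ) = (p+1)*(p+8) := by
    have h' : (2:ℝ) * (Pp (m+1) : ℝ) = ((m:ℝ)+1) * (((m:ℝ)+1)+7) := by
      exact_mod_cast two_Pp (m+1)
    rw [h', hp]; ring
  have hQ : 2 * (Qq m : ℝ) = p*(p+1) := by
    have h' : (2:ℝ) * (Qq m : ℝ) = (m:ℝ) * ((m:ℝ)+1) := by
      exact_mod_cast two_Qq m
    rw [h', hp]
  have hdivnn : (0:ℝ) ≤ 64/ε := by positivity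
  have goal2 : (1-ε) * (2 * (Pp (m+1) : ℝ)) ≤ 2*(Qq m : ℝ) + (64/ε + 8) := by
    rw [hP, hQ]
    rcases le_or_gt 8 (ε*(p+8)) with h8 | h8
    · have h8p1 : 8*(p+1) ≤ ε*(p+8)*(p+1) := by nlinarith
      nlinarith
    · have hεp : ε * p ≤ 8 := by nlinarith
      have h8p : 8*p ≤ 64/ε := by
        rw [le_div_iff₀ hε]; nlinarith
      have hprod : (0:ℝ) ≤ (p+1)*(p+8) := by positivity
      have hshrink : (1-ε)*((p+1)*(p+8)) ≤ (p+1)*(p+8) := by nlinarith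
      have hexp : (p+1)*(p+8) = p*(p+1) + 8*p + 8 := by ring
      nlinarith
  have final : 2*((1-ε) * (Pp (m+1):ℝ)) ≤ 2*((Qq m:ℝ) + (32/ε + 4)) := by
    calc 2*((1-ε) * (Pp (m+1):ℝ)) = (1-ε) * (2 * (Pp (m+1) : ℝ)) := by ring
      _ ≤ 2*(Qq m : ℝ) + (64/ε + 8) := goal2
      _ = 2*((Qq m:ℝ) + (32/ε + 4)) := by ring
  linarith

lemma holder_est (ε : ℝ) (hε : 0 < ε) (hε1 : ε ≤ 1) (x y : XX) :
    |Psi x - Psi y| ≤ (3:ℝ) ^ ((32/ε + 5) : ℝ) * |Phi o x - Phi o y| ^ ((1-ε) : ℝ) := by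
  by_cases hxy : x = y
  · rw [hxy]
    simp only [sub_self, abs_zero]
    positivity
  · have hex : ∃ n, x n ≠ y n := by
      by_contra h; push_neg at h; exact hxy (funext h)
    classical
    set m := Nat.find hex with hm
    have hmne : x m ≠ y m := Nat.find_spec hex
    have hpre : ∀ j, j < m → x j = y j := by
      intro j hj
      by_contra h
      exact absurd (Nat.find_le h : m ≤ j) (by omega)
    have h1 : |Psi x - Psi y| ≤ (3/2) * ((3:ℝ) ^ Qq m)⁻¹ := psi_diff x y m hpre
    have hsep : ((3:ℝ) ^ Pp (m+1))⁻¹ ≤ |Phi o x - Phi o y| := phi_sep o x y m hpre hmne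
    -- rpow versions
    have h3pos : (0:ℝ) < 3 := by norm_num
    have hrw1 : ((3:ℝ) ^ Qq m)⁻¹ = (3:ℝ) ^ (-(Qq m : ℝ)) := by
      rw [Real.rpow_neg h3pos.le, Real.rpow_natCast]
    have hrw2 : ((3:ℝ) ^ Pp (m+1))⁻¹ = (3:ℝ) ^ (-(Pp (m+1) : ℝ)) := by
      rw [Real.rpow_neg h3pos.le, Real.rpow_natCast]
    have step1 : (3/2:ℝ) * ((3:ℝ) ^ Qq m)⁻¹ ≤ (3:ℝ) ^ ((1:ℝ) - (Qq m : ℝ)) := by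
      rw [hrw1, show (1:ℝ) - (Qq m:ℝ) = 1 + (-(Qq m:ℝ)) from by ring,
        Real.rpow_add h3pos, Real.rpow_one]
      have : (0:ℝ) < (3:ℝ) ^ (-(Qq m : ℝ)) := Real.rpow_pos_of_pos h3pos _
      nlinarith
    have step2 : (3:ℝ) ^ ((1:ℝ) - (Qq m : ℝ)) ≤
        (3:ℝ) ^ ((32/ε + 5) + (1-ε) * (-(Pp (m+1) : ℝ))) := by
      rw [Real.rpow_le_rpow_left_iff (by norm_num : (1:ℝ) < 3)]
      have := exponent_bound ε hε m
      nlinarith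
    have step3 : (3:ℝ) ^ ((32/ε + 5) + (1-ε) * (-(Pp (m+1) : ℝ)))
        = (3:ℝ) ^ ((32/ε + 5):ℝ) * ((3:ℝ) ^ (-(Pp (m+1) : ℝ))) ^ ((1-ε):ℝ) := by
      rw [Real.rpow_add h3pos]
      congr 1
      rw [← Real.rpow_mul h3pos.le]
      congr 1
      ring
    have step4 : ((3:ℝ) ^ (-(Pp (m+1) : ℝ))) ^ ((1-ε):ℝ) ≤ |Phi o x - Phi o y| ^ ((1-ε):ℝ) := by
      apply Real.rpow_le_rpow (Real.rpow_pos_of_pos h3pos _).le _ (by linarith)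
      rw [← hrw2]; exact hsep
    calc |Psi x - Psi y| ≤ (3/2) * ((3:ℝ) ^ Qq m)⁻¹ := h1
      _ ≤ (3:ℝ) ^ ((1:ℝ) - (Qq m : ℝ)) := step1
      _ ≤ (3:ℝ) ^ ((32/ε + 5) + (1-ε) * (-(Pp (m+1) : ℝ))) := step2
      _ = (3:ℝ) ^ ((32/ε + 5):ℝ) * ((3:ℝ) ^ (-(Pp (m+1) : ℝ))) ^ ((1-ε):ℝ) := step3
      _ ≤ (3:ℝ) ^ ((32/ε + 5):ℝ) * |Phi o x - Phi o y| ^ ((1-ε):ℝ) := by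
          apply mul_le_mul_of_nonneg_left step4 (Real.rpow_pos_of_pos h3pos _).le


lemma Pp_le_Pp {i n : ℕ} (h : i ≤ n) : Pp i ≤ Pp n := by
  have := Pp_add_le i (n - i)
  rw [show i + (n - i) = n from by omega] at this
  omega

/-- the probe position at level `n` -/
def pos (n : ℕ) : ℕ :=
  if (Nat.unpair n).1 < n then
    (Pp n - Pp ((Nat.unpair n).1 + 1)) + ((Nat.unpair n).2 % ((Nat.unpair n).1 + 4))
  else 0

/-- the digit-offset function for the set A -/
def oA (n a : ℕ) : ℕ := a / 3 ^ pos n % 3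

/-- the digit-offset function for the set B -/
def oB (n a : ℕ) : ℕ := 0

lemma sd_zero (y : XX) (n : ℕ) : sd oB y n = 3 * (y n : ℕ) := by
  unfold sd oB; simp

lemma block (x : XX) (i : ℕ) : ∀ n, i < n → ∃ e lo hi, Pp (i+1) + e = Pp n ∧
    al oA x n = lo + 3^e * (sd oA x i + 3^(i+4) * hi) ∧ lo < 3^e := by
  intro n
  induction n with
  | zero => omega
  | succ n ih =>
      intro hin
      rcases Nat.lt_or_ge i n with hlt | hge
      · obtain ⟨e, lo, hi, he, hal, hlo⟩ := ih hlt
        refine ⟨e + (n+4), 3^(n+4) * lo + sd oA x n, hi, ?_, ?_, ?_⟩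
        · rw [Pp_succ n]; omega
        · rw [al_succ, hal, pow_add]
          ring
        · have hsd : sd oA x n < 3^(n+4) := by
            calc sd oA x n < 3^(n+2) := sd_lt oA x n
              _ ≤ 3^(n+4) := Nat.pow_le_pow_right (by norm_num) (by omega)
          have hlo' : lo + 1 ≤ 3^e := hlo
          calc 3^(n+4) * lo + sd oA x n < 3^(n+4) * lo + 3^(n+4) := by omega
            _ = 3^(n+4) * (lo + 1) := by ring
            _ ≤ 3^(n+4) * 3^e := Nat.mul_le_mul_left _ hlo'
            _ = 3^(e + (n+4)) := by rw [pow_add]; ring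
      · have hieq : i = n := by omega
        subst hieq
        refine ⟨0, 0, al oA x i, ?_, ?_, ?_⟩
        · rw [Pp_succ i]; omega
        · rw [al_succ]; ring
        · norm_num

lemma dig_block (x : XX) {i n : ℕ} (h : i < n) {r : ℕ} (hr : r < i+4) :
    al oA x n / 3 ^ ((Pp n - Pp (i+1)) + r) % 3 = sd oA x i / 3 ^ r % 3 := by
  obtain ⟨e, lo, hi, hPe, hal, hlo⟩ := block x i n h
  have hsub : Pp n - Pp (i+1) = e := by omega
  rw [hsub, hal]
  set M := sd oA x i + 3^(i+4) * hi with hM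
  have h3e : (0:ℕ) < 3^e := by positivity
  have h3r : (0:ℕ) < 3^r := by positivity
  have step1 : (lo + 3^e * M) / 3^(e+r) = M / 3^r := by
    rw [pow_add, ← Nat.div_div_eq_div_mul]
    congr 1
    rw [Nat.add_mul_div_left _ _ h3e, Nat.div_eq_of_lt hlo]
    omega
  rw [step1, hM]
  have hsplit : 3^(i+4) * hi = 3^r * (3^(i+4-r) * hi) := by
    rw [← mul_assoc, ← pow_add]
    congr 2
    omega
  rw [hsplit, Nat.add_mul_div_left _ _ h3r]
  have hdvd : 3 ∣ 3^(i+4-r) := dvd_pow_self 3 (by omega)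
  obtain ⟨w, hw⟩ := hdvd
  rw [hw]
  rw [show sd oA x i / 3 ^ r + 3 * w * hi = sd oA x i / 3 ^ r + 3 * (w * hi) from by ring]
  simp [Nat.add_mul_mod_self_left]

lemma digit_neq : ∀ (R a b : ℕ), a < 3^R → b < 3^R → a ≠ b →
    ∃ r, r < R ∧ a / 3^r % 3 ≠ b / 3^r % 3 := by
  intro R
  induction R with
  | zero => intro a b ha hb hne; simp at ha hb; omega
  | succ R ih =>
      intro a b ha hb hne
      rcases Nat.decEq (a % 3) (b % 3) with h3 | h3
      · -- a % 3 ≠ b % 3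
        exact ⟨0, by omega, by simpa using h3⟩
      · -- equal mod 3, recurse on /3
        have hdiv : a / 3 ≠ b / 3 := by omega
        have ha' : a / 3 < 3^R := by
          apply Nat.div_lt_of_lt_mul
          calc a < 3^(R+1) := ha
            _ = 3 * 3^R := by ring
        have hb' : b / 3 < 3^R := by
          apply Nat.div_lt_of_lt_mul
          calc b < 3^(R+1) := hb
            _ = 3 * 3^R := by ring
        obtain ⟨r, hrR, hrne⟩ := ih (a/3) (b/3) ha' hb' hdiv
        refine ⟨r+1, by omega, ?_⟩
        rw [show (3:ℕ)^(r+1) = 3 * 3^r from by ring]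
        rw [← Nat.div_div_eq_div_mul, ← Nat.div_div_eq_div_mul]
        exact hrne

lemma pos_probe (i r : ℕ) (hr : r < i + 4) :
    let nn := Nat.pair i (r + (i+4)*(i+1))
    i < nn ∧ pos nn = (Pp nn - Pp (i+1)) + r := by
  intro nn
  have hunp : Nat.unpair nn = (i, r + (i+4)*(i+1)) := Nat.unpair_pair i _
  have hmge : (i+1) ≤ r + (i+4)*(i+1) := by
    have : (i+1) ≤ (i+4)*(i+1) := Nat.le_mul_of_pos_left _ (by omega)
    omega
  have hin : i < nn := by
    have := Nat.right_le_pair i (r + (i+4)*(i+1))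
    omega
  refine ⟨hin, ?_⟩
  unfold pos
  rw [hunp]
  simp only
  rw [if_pos hin]
  congr 1
  rw [Nat.add_mul_mod_self_left, Nat.mod_eq_of_lt hr]


lemma D_eq (x1 x2 y1 y2 : XX)
    (h : Phi oA x1 + Phi oB y2 = Phi oA x2 + Phi oB y1) (n : ℕ) :
    (al oA x1 n : ℤ) + (al oB y2 n : ℤ) = (al oA x2 n : ℤ) + (al oB y1 n : ℤ) := by
  set c := ((3:ℝ) ^ Pp n)⁻¹ with hc
  have hcpos : (0:ℝ) < c := by rw [hc]; positivity
  set T1 := ∑' m, term oA x1 (n+m) with hT1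
  set T2 := ∑' m, term oA x2 (n+m) with hT2
  set T3 := ∑' m, term oB y1 (n+m) with hT3
  set T4 := ∑' m, term oB y2 (n+m) with hT4
  have e1 : Phi oA x1 = (al oA x1 n : ℝ) * c + T1 := by
    rw [Phi_eq oA x1 n, hc, div_eq_mul_inv]
  have e2 : Phi oA x2 = (al oA x2 n : ℝ) * c + T2 := by
    rw [Phi_eq oA x2 n, hc, div_eq_mul_inv]
  have e3 : Phi oB y1 = (al oB y1 n : ℝ) * c + T3 := by
    rw [Phi_eq oB y1 n, hc, div_eq_mul_inv]
  have e4 : Phi oB y2 = (al oB y2 n : ℝ) * c + T4 := by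
    rw [Phi_eq oB y2 n, hc, div_eq_mul_inv]
  have t1a := tail_nonneg oA x1 n; have t1b := tail_le oA x1 n
  have t2a := tail_nonneg oA x2 n; have t2b := tail_le oA x2 n
  have t3a := tail_nonneg oB y1 n; have t3b := tail_le oB y1 n
  have t4a := tail_nonneg oB y2 n; have t4b := tail_le oB y2 n
  rw [← hT1] at t1a t1b
  rw [← hT2] at t2a t2b
  rw [← hT3] at t3a t3b
  rw [← hT4] at t4a t4b
  rw [← hc] at t1b t2b t3b t4b
  set L : ℤ := (al oA x1 n : ℤ) + (al oB y2 n : ℤ) with hL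
  set Rr : ℤ := (al oA x2 n : ℤ) + (al oB y1 n : ℤ) with hR
  have hLr : (L:ℝ) = (al oA x1 n : ℝ) + (al oB y2 n : ℝ) := by rw [hL]; push_cast; ring
  have hRr : (Rr:ℝ) = (al oA x2 n : ℝ) + (al oB y1 n : ℝ) := by rw [hR]; push_cast; ring
  have heq : ((L:ℝ) - (Rr:ℝ)) * c = (T2 + T3) - (T1 + T4) := by
    rw [hLr, hRr]
    linear_combination h - e1 - e4 + e2 + e3
  have habs : |((L:ℝ) - (Rr:ℝ)) * c| ≤ (2/3) * c := by
    rw [heq]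
    rw [abs_le]
    constructor <;> [linarith; linarith]
  have habs2 : |(L:ℝ) - (Rr:ℝ)| * c ≤ (2/3) * c := by
    calc |(L:ℝ) - (Rr:ℝ)| * c = |(L:ℝ) - (Rr:ℝ)| * |c| := by rw [abs_of_pos hcpos]
      _ = |((L:ℝ) - (Rr:ℝ)) * c| := (abs_mul _ _).symm
      _ ≤ (2/3) * c := habs
  have hfin : |(L:ℝ) - (Rr:ℝ)| ≤ 2/3 := le_of_mul_le_mul_right habs2 hcpos
  have : L = Rr := by
    have h1 : |((L - Rr : ℤ) : ℝ)| ≤ 2/3 := by push_cast; exact hfin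
    have h2 : |L - Rr| ≤ 0 ∨ L = Rr := by
      by_contra hcon
      push_neg at hcon
      have : (1:ℤ) ≤ |L - Rr| := by
        have := abs_pos.mpr (sub_ne_zero.mpr hcon.2)
        omega
      have : (1:ℝ) ≤ |((L - Rr : ℤ) : ℝ)| := by
        rw [show |((L - Rr : ℤ) : ℝ)| = ((|L - Rr| : ℤ) : ℝ) from by push_cast; simp]
        exact_mod_cast this
      linarith
    rcases h2 with h2 | h2
    · have := abs_nonneg (L - Rr)
      have : |L - Rr| = 0 := le_antisymm h2 this
      have := abs_eq_zero.mp this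
      omega
    · exact h2
  omega

lemma w_eq (x1 x2 y1 y2 : XX)
    (h : Phi oA x1 + Phi oB y2 = Phi oA x2 + Phi oB y1) (n : ℕ) :
    (sd oA x1 n : ℤ) + (sd oB y2 n : ℤ) = (sd oA x2 n : ℤ) + (sd oB y1 n : ℤ) := by
  have e1 := D_eq x1 x2 y1 y2 h (n+1)
  have e2 := D_eq x1 x2 y1 y2 h n
  have a1 : (al oA x1 (n+1) : ℤ) = 3^(n+4) * (al oA x1 n : ℤ) + (sd oA x1 n : ℤ) := by
    rw [al_succ]; push_cast; ring
  have a2 : (al oA x2 (n+1) : ℤ) = 3^(n+4) * (al oA x2 n : ℤ) + (sd oA x2 n : ℤ) := by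
    rw [al_succ]; push_cast; ring
  have a3 : (al oB y1 (n+1) : ℤ) = 3^(n+4) * (al oB y1 n : ℤ) + (sd oB y1 n : ℤ) := by
    rw [al_succ]; push_cast; ring
  have a4 : (al oB y2 (n+1) : ℤ) = 3^(n+4) * (al oB y2 n : ℤ) + (sd oB y2 n : ℤ) := by
    rw [al_succ]; push_cast; ring
  linear_combination e1 - a1 - a4 + a2 + a3 - 3^(n+4) * e2

lemma dA_eq (x1 x2 y1 y2 : XX)
    (h : Phi oA x1 + Phi oB y2 = Phi oA x2 + Phi oB y1) (n : ℕ) :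
    oA n (al oA x1 n) % 3 = oA n (al oA x2 n) % 3 := by
  have hw := w_eq x1 x2 y1 y2 h n
  have h1 : sd oA x1 n = oA n (al oA x1 n) % 3 + 3 * (x1 n : ℕ) := rfl
  have h2 : sd oA x2 n = oA n (al oA x2 n) % 3 + 3 * (x2 n : ℕ) := rfl
  have h3 : sd oB y1 n = 3 * (y1 n : ℕ) := sd_zero y1 n
  have h4 : sd oB y2 n = 3 * (y2 n : ℕ) := sd_zero y2 n
  rw [h1, h2, h3, h4] at hw
  have m1 : oA n (al oA x1 n) % 3 < 3 := Nat.mod_lt _ (by norm_num)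
  have m2 : oA n (al oA x2 n) % 3 < 3 := Nat.mod_lt _ (by norm_num)
  push_cast at hw
  omega

theorem main_comb (x1 x2 y1 y2 : XX)
    (h : Phi oA x1 + Phi oB y2 = Phi oA x2 + Phi oB y1) : x1 = x2 := by
  by_contra hne
  have hex : ∃ n, x1 n ≠ x2 n := by
    by_contra hc; push_neg at hc; exact hne (funext hc)
  classical
  set i := Nat.find hex with hi
  have hine : x1 i ≠ x2 i := Nat.find_spec hex
  have hpre : ∀ j, j < i → x1 j = x2 j := by
    intro j hj
    by_contra hcon
    exact absurd (Nat.find_le hcon : i ≤ j) (by omega)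
  have hal : al oA x1 i = al oA x2 i := al_congr oA x1 x2 i hpre
  -- the digits at level i differ
  have hsne : sd oA x1 i ≠ sd oA x2 i := by
    intro hcon
    apply hine
    have h1 : sd oA x1 i = oA i (al oA x1 i) % 3 + 3 * (x1 i : ℕ) := rfl
    have h2 : sd oA x2 i = oA i (al oA x2 i) % 3 + 3 * (x2 i : ℕ) := rfl
    rw [h1, h2, hal] at hcon
    have : (x1 i : ℕ) = (x2 i : ℕ) := by omega
    exact Fin.ext this
  have hs1 : sd oA x1 i < 3^(i+4) := by
    calc sd oA x1 i < 3^(i+2) := sd_lt oA x1 i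
      _ ≤ 3^(i+4) := Nat.pow_le_pow_right (by norm_num) (by omega)
  have hs2 : sd oA x2 i < 3^(i+4) := by
    calc sd oA x2 i < 3^(i+2) := sd_lt oA x2 i
      _ ≤ 3^(i+4) := Nat.pow_le_pow_right (by norm_num) (by omega)
  obtain ⟨r, hrR, hrne⟩ := digit_neq (i+4) (sd oA x1 i) (sd oA x2 i) hs1 hs2 hsne
  obtain ⟨hin, hpos⟩ := pos_probe i r hrR
  set nn := Nat.pair i (r + (i+4)*(i+1)) with hnn
  have hd1 : al oA x1 nn / 3 ^ ((Pp nn - Pp (i+1)) + r) % 3 = sd oA x1 i / 3 ^ r % 3 :=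
    dig_block x1 hin hrR
  have hd2 : al oA x2 nn / 3 ^ ((Pp nn - Pp (i+1)) + r) % 3 = sd oA x2 i / 3 ^ r % 3 :=
    dig_block x2 hin hrR
  have hoA1 : oA nn (al oA x1 nn) = sd oA x1 i / 3 ^ r % 3 := by
    unfold oA
    rw [hpos]
    exact hd1
  have hoA2 : oA nn (al oA x2 nn) = sd oA x2 i / 3 ^ r % 3 := by
    unfold oA
    rw [hpos]
    exact hd2
  have := dA_eq x1 x2 y1 y2 h nn
  rw [hoA1, hoA2] at this
  have m1 : sd oA x1 i / 3 ^ r % 3 < 3 := Nat.mod_lt _ (by norm_num)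
  have m2 : sd oA x2 i / 3 ^ r % 3 < 3 := Nat.mod_lt _ (by norm_num)
  rw [Nat.mod_eq_of_lt m1, Nat.mod_eq_of_lt m2] at this
  exact hrne this


lemma dimH_Icc01 : dimH (Icc (0:ℝ) 1) = 1 := by
  rw [Real.dimH_of_mem_nhds (x := (1/2:ℝ)) (Icc_mem_nhds (by norm_num) (by norm_num))]
  simp

lemma Icc_subset_image :
    Icc (0:ℝ) 1 ⊆ (fun a => Psi (Function.invFun (Phi o) a)) '' (Set.range (Phi o)) := by
  intro cc hcc
  refine ⟨Phi o (xdig cc), mem_range_self _, ?_⟩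
  have hlinv : Function.invFun (Phi o) (Phi o (xdig cc)) = xdig cc :=
    Function.leftInverse_invFun (phi_injective o) (xdig cc)
  simp only [hlinv]
  exact psi_xdig cc hcc.1 hcc.2

lemma edist_real (a b : ℝ) : edist a b = ENNReal.ofReal |a - b| := by
  rw [edist_dist, Real.dist_eq]

lemma dimH_ge_phi (c : ℝ≥0) (hc0 : 0 < c) (hc1 : (c:ℝ) < 1) :
    (c : ℝ≥0∞) ≤ dimH (Set.range (Phi o)) := by
  set ε := 1 - (c:ℝ) with hε
  have hε0 : 0 < ε := by rw [hε]; linarith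
  have hε1 : ε ≤ 1 := by
    rw [hε]
    have : (0:ℝ) ≤ (c:ℝ) := c.2
    linarith
  have hce : (c:ℝ) = 1 - ε := by rw [hε]; ring
  set CC := (3:ℝ) ^ ((32/ε + 5) : ℝ) with hCC
  have hCC0 : 0 < CC := Real.rpow_pos_of_pos (by norm_num) _
  set f : ℝ → ℝ := fun a => Psi (Function.invFun (Phi o) a) with hf
  have hhol : HolderOnWith CC.toNNReal c f (Set.range (Phi o)) := by
    intro a ha b hb
    have hfa : Phi o (Function.invFun (Phi o) a) = a := Function.invFun_eq ha
    have hfb : Phi o (Function.invFun (Phi o) b) = b := Function.invFun_eq hb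
    have hest := holder_est o ε hε0 hε1 (Function.invFun (Phi o) a) (Function.invFun (Phi o) b)
    rw [hfa, hfb, ← hce, ← hCC] at hest
    have hr0 : (0:ℝ) ≤ (c:ℝ) := c.2
    calc edist (f a) (f b) = ENNReal.ofReal |f a - f b| := edist_real _ _
      _ ≤ ENNReal.ofReal (CC * |a - b| ^ ((c:ℝ))) := by
          apply ENNReal.ofReal_le_ofReal
          exact hest
      _ = ENNReal.ofReal CC * ENNReal.ofReal (|a - b| ^ ((c:ℝ))) := by
          rw [ENNReal.ofReal_mul hCC0.le]
      _ = (CC.toNNReal : ℝ≥0∞) * (edist a b) ^ ((c:ℝ)) := by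
          rw [← ENNReal.ofReal_rpow_of_nonneg (abs_nonneg _) hr0, edist_real]
          rfl
  have him : dimH ((fun a => Psi (Function.invFun (Phi o) a)) '' (Set.range (Phi o))) ≤
      dimH (Set.range (Phi o)) / c := hhol.dimH_image_le hc0
  have hone : (1:ℝ≥0∞) ≤ dimH (f '' (Set.range (Phi o))) := by
    rw [← dimH_Icc01]
    exact dimH_mono (Icc_subset_image o)
  have h1 : (1:ℝ≥0∞) ≤ dimH (Set.range (Phi o)) / c := le_trans hone him
  rw [ENNReal.le_div_iff_mul_le (Or.inl (by exact_mod_cast hc0.ne')) (Or.inl ENNReal.coe_ne_top)] at h1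
  simpa using h1

lemma dimH_range_phi : dimH (Set.range (Phi o)) = 1 := by
  apply le_antisymm
  · calc dimH (Set.range (Phi o)) ≤ dimH (univ : Set ℝ) := dimH_mono (subset_univ _)
      _ = 1 := Real.dimH_univ
  · by_contra hcon
    push_neg at hcon
    obtain ⟨c, hc1, hc2⟩ := ENNReal.lt_iff_exists_nnreal_btwn.mp hcon
    set c' : ℝ≥0 := max c (1/2) with hc'
    have hc'0 : 0 < c' := lt_of_lt_of_le (by norm_num) (le_max_right _ _)
    have hcNN : c < 1 := by exact_mod_cast hc2
    have hhalf : (1/2 : ℝ≥0) < 1 := by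
      rw [← NNReal.coe_lt_coe]; norm_num
    have hc'NN : c' < 1 := by rw [hc']; exact max_lt hcNN hhalf
    have hc'r : ((c' : ℝ≥0) : ℝ) < 1 := by exact_mod_cast hc'NN
    have := dimH_ge_phi o c' hc'0 hc'r
    have hlt : dimH (Set.range (Phi o)) < (c' : ℝ≥0∞) :=
      lt_of_lt_of_le hc1 (by exact_mod_cast le_max_left c (1/2))
    exact absurd this (not_le.mpr hlt)


lemma compact_range_phi : IsCompact (Set.range (Phi o)) :=
  isCompact_range (continuous_Phi o)

theorem inter_subsingleton (z : ℝ) :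
    ((Set.range (Phi oA)) ∩ ((fun b => b + z) '' (Set.range (Phi oB)))).Subsingleton := by
  intro p hp q hq
  obtain ⟨⟨x1, hx1⟩, b1, ⟨y1, hy1⟩, hb1⟩ := hp
  obtain ⟨⟨x2, hx2⟩, b2, ⟨y2, hy2⟩, hb2⟩ := hq
  simp only at hb1 hb2
  have key : Phi oA x1 + Phi oB y2 = Phi oA x2 + Phi oB y1 := by
    rw [hx1, hx2, hy1, hy2]
    have h1 : b1 + z = p := hb1
    have h2 : b2 + z = q := hb2
    linarith
  have := main_comb x1 x2 y1 y2 key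
  rw [← hx1, ← hx2, this]

end Keleti

/-- For every `0 ≤ s ≤ 1` there are compact `A, B ⊆ ℝ` of Hausdorff dimension 1 such that
`A ∩ (B + z)` contains at most one point for every `z`. -/
theorem stmt3 (s : ℝ) (h0 : 0 ≤ s) (h1 : s ≤ 1) :
    ∃ A B : Set ℝ, IsCompact A ∧ IsCompact B ∧ dimH A = 1 ∧ dimH B = 1 ∧
      ∀ z : ℝ, (A ∩ ((fun b => b + z) '' B)).Subsingleton := by
  refine ⟨Set.range (Keleti.Phi Keleti.oA), Set.range (Keleti.Phi Keleti.oB),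
    Keleti.compact_range_phi _, Keleti.compact_range_phi _,
    Keleti.dimH_range_phi _, Keleti.dimH_range_phi _,
    Keleti.inter_subsingleton⟩
end
end

section
/- Let μ be a finite compactly supported Borel measure on ℝⁿ and 0 < s < n. Then I_s(μ) = c(n,s) ∫_{ℝⁿ} |μ̂(x)|² |x|^{s−n} dx, where c(n,s) > 0 is a constant depending only on n and s. -/
open MeasureTheory Metric Set Function
open scoped ENNReal NNReal Topology

set_option maxHeartbeats 1000000

noncomputable section

/-- The `s`-energy `I_s(μ) = ∬ |x-y|^{-s} dμ dμ`. -/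
def energy {n : ℕ} (μ : Measure (En n)) (s : ℝ) : ℝ≥0∞ :=
  ∫⁻ x, ∫⁻ y, (‖x - y‖₊ : ℝ≥0∞) ^ (-s) ∂μ ∂μ

/-- The Fourier transform `μ̂(ξ) = ∫ e^{-2πi x·ξ} dμ(x)` of a measure. -/
def ft {n : ℕ} (μ : Measure (En n)) (ξ : En n) : ℂ :=
  ∫ x, Complex.exp ((-2 * Real.pi * Complex.I) * ((inner ℝ x ξ : ℝ) : ℂ)) ∂μ

/-- The spherical average `σ(μ)(r) = r^{1-n} ∫_{S(r)} |μ̂|² dσ_r^{n-1}`, written via the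
parametrization of `S(r)` by the unit sphere (with its surface measure `volume.toSphere`). -/
def sphAvg {n : ℕ} (μ : Measure (En n)) (r : ℝ) : ℝ≥0∞ :=
  ∫⁻ v, (‖ft μ (r • (v : En n))‖₊ : ℝ≥0∞) ^ 2 ∂((volume : Measure (En n)).toSphere)
open Real

lemma kern_int {a : ℝ} (ha : 0 < a) {c : ℝ} (hc : 0 < c) :
    IntegrableOn (fun t : ℝ => t ^ (a - 1) * rexp (-(c * t))) (Ioi 0) := by
  have h1 := Real.GammaIntegral_convergent ha
  have h2 : IntegrableOn (fun x : ℝ => rexp (-(c * x)) * (c * x) ^ (a - 1)) (Ioi 0) := by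
    have := (integrableOn_Ioi_comp_mul_left_iff
      (fun u : ℝ => rexp (-u) * u ^ (a - 1)) 0 hc).mpr (by simpa using h1)
    simpa [mul_zero] using this
  have h3 : IntegrableOn (fun x : ℝ => c ^ (1 - a) * (rexp (-(c * x)) * (c * x) ^ (a - 1)))
      (Ioi 0) := by simpa [IntegrableOn, Pi.smul_def, smul_eq_mul, funext_iff] using h2.smul (c ^ (1 - a))
  apply h3.congr_fun ?_ measurableSet_Ioi
  intro x hx
  have hx0 : (0:ℝ) < x := hx
  simp only
  rw [Real.mul_rpow hc.le hx0.le, show c ^ (1-a) * (rexp (-(c*x)) * (c^(a-1) * x^(a-1)))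
      = (c^(1-a) * c^(a-1)) * (x^(a-1) * rexp (-(c*x))) from by ring, ← Real.rpow_add hc]
  norm_num

lemma kern {a : ℝ} (ha : 0 < a) {c : ℝ} (hc : 0 < c) :
    ∫⁻ t in Ioi (0:ℝ), ENNReal.ofReal (t ^ (a - 1) * rexp (-(c * t)))
      = ENNReal.ofReal ((1 / c) ^ a * Real.Gamma a) := by
  rw [← integral_rpow_mul_exp_neg_mul_Ioi ha hc]
  rw [← ofReal_integral_eq_lintegral_ofReal (kern_int ha hc) ?_]
  filter_upwards [ae_restrict_mem measurableSet_Ioi] with x hx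
  have : (0:ℝ) < x := hx
  positivity

lemma kern_zero {a : ℝ} (ha : 0 < a) :
    ∫⁻ t in Ioi (0:ℝ), ENNReal.ofReal (t ^ (a - 1)) = ∞ := by
  by_contra h
  have hm : AEStronglyMeasurable (fun t : ℝ => t ^ (a - 1))
      ((volume : Measure ℝ).restrict (Ioi 0)) :=
    (measurable_id.pow measurable_const).aestronglyMeasurable
  have hnn : 0 ≤ᵐ[(volume : Measure ℝ).restrict (Ioi 0)] fun t : ℝ => t ^ (a - 1) := by
    filter_upwards [ae_restrict_mem measurableSet_Ioi] with x hx
    have : (0:ℝ) < x := hx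
    positivity
  have hint := (lintegral_ofReal_ne_top_iff_integrable hm hnn).mp h
  have hint' : IntegrableOn (fun t : ℝ => t ^ (a - 1)) (Ioi 0) := hint
  have h2 : IntegrableOn (fun t : ℝ => t ^ (a - 1)) (Ioi 1) :=
    hint'.mono_set (Ioi_subset_Ioi zero_le_one)
  rw [integrableOn_Ioi_rpow_iff zero_lt_one] at h2
  linarith

lemma alg {E : Type*} [NormedAddCommGroup E] {a : ℝ} (ha : 0 < a) {z : E} (hz : z ≠ 0) :
    ENNReal.ofReal ((1 / (π * ‖z‖ ^ 2)) ^ a * Real.Gamma a)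
      = ENNReal.ofReal (π ^ (-a) * Real.Gamma a) * (‖z‖₊ : ℝ≥0∞) ^ (-(2 * a)) := by
  have hz' : (0:ℝ) < ‖z‖ := norm_pos_iff.mpr hz
  have h1 : (‖z‖₊ : ℝ≥0∞) ^ (-(2 * a)) = ENNReal.ofReal (‖z‖ ^ (-(2 * a))) := by
    rw [← enorm_eq_nnnorm, ← ofReal_norm, ENNReal.ofReal_rpow_of_pos hz']
  rw [h1, ← ENNReal.ofReal_mul (by positivity)]
  congr 1
  have h2 : (1 / (π * ‖z‖ ^ 2)) ^ a = π ^ (-a) * ‖z‖ ^ (-(2 * a)) := by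
    rw [one_div, ← Real.rpow_neg_one (π * ‖z‖ ^ 2),
      ← Real.rpow_mul (by positivity : (0:ℝ) ≤ π * ‖z‖ ^ 2),
      Real.mul_rpow pi_pos.le (by positivity), show (-1:ℝ) * a = -a by ring]
    congr 1
    rw [← Real.rpow_natCast ‖z‖ 2, ← Real.rpow_mul hz'.le]
    congr 1
    push_cast; ring
  rw [h2]; ring

lemma kernA {E : Type*} [NormedAddCommGroup E] {a : ℝ} (ha : 0 < a) (z : E) :
    ∫⁻ t in Ioi (0:ℝ), ENNReal.ofReal (t ^ (a - 1) * rexp (-(π * ‖z‖ ^ 2 * t)))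
      = ENNReal.ofReal (π ^ (-a) * Real.Gamma a) * (‖z‖₊ : ℝ≥0∞) ^ (-(2 * a)) := by
  rcases eq_or_ne z 0 with rfl | hz
  · have hL : ∫⁻ t in Ioi (0:ℝ), ENNReal.ofReal (t ^ (a - 1) * rexp (-(π * ‖(0:E)‖ ^ 2 * t)))
        = ∫⁻ t in Ioi (0:ℝ), ENNReal.ofReal (t ^ (a - 1)) := by
      simp [norm_zero]
    rw [hL, kern_zero ha]
    have hc : ENNReal.ofReal (π ^ (-a) * Real.Gamma a) ≠ 0 :=
      (ENNReal.ofReal_pos.mpr (by positivity)).ne'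
    rw [nnnorm_zero, ENNReal.coe_zero, ENNReal.zero_rpow_of_neg (by linarith), ENNReal.mul_top hc]
  · have hz' : (0:ℝ) < ‖z‖ := norm_pos_iff.mpr hz
    rw [kern ha (show (0:ℝ) < π * ‖z‖ ^ 2 by positivity), alg ha hz]

lemma kernB {E : Type*} [NormedAddCommGroup E] {a : ℝ} (ha : 0 < a) {z : E} (hz : z ≠ 0) :
    ∫⁻ t in Ioi (0:ℝ), ENNReal.ofReal (t ^ (-a - 1) * rexp (-(π * ‖z‖ ^ 2 / t)))
      = ENNReal.ofReal (π ^ (-a) * Real.Gamma a) * (‖z‖₊ : ℝ≥0∞) ^ (-(2 * a)) := by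
  have hz' : (0:ℝ) < ‖z‖ := norm_pos_iff.mpr hz
  set c : ℝ := π * ‖z‖ ^ 2 with hc
  have hcpos : 0 < c := by positivity
  -- integrability via substitution x ↦ x⁻¹
  have hI : IntegrableOn (fun x : ℝ => x ^ ((-1:ℝ) - 1) • ((fun u : ℝ => u ^ (a - 1) * rexp (-(c * u))) (x ^ (-1:ℝ)))) (Ioi 0) :=
    (integrableOn_Ioi_comp_rpow_iff' (fun u : ℝ => u ^ (a - 1) * rexp (-(c * u)))
      (by norm_num : (-1:ℝ) ≠ 0)).mpr (kern_int ha hcpos)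
  have heq : ∀ x ∈ Ioi (0:ℝ),
      x ^ ((-1:ℝ) - 1) • ((fun u : ℝ => u ^ (a - 1) * rexp (-(c * u))) (x ^ (-1:ℝ)))
        = x ^ (-a - 1) * rexp (-(c / x)) := by
    intro x hx
    have hx0 : (0:ℝ) < x := hx
    simp only [smul_eq_mul]
    have e1 : (x ^ (-1:ℝ)) ^ (a - 1) = x ^ (-(a - 1)) := by
      rw [← Real.rpow_mul hx0.le]; congr 1; ring
    have e3 : c * x ^ (-1:ℝ) = c / x := by
      rw [Real.rpow_neg_one]; rw [div_eq_mul_inv]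
    have e2 : x ^ ((-1:ℝ) - 1) * x ^ (-(a - 1)) = x ^ (-a - 1) := by
      rw [← Real.rpow_add hx0]; congr 1; ring
    rw [e1, e3, ← mul_assoc, e2]
  have hI2 : IntegrableOn (fun x : ℝ => x ^ (-a - 1) * rexp (-(c / x))) (Ioi 0) :=
    hI.congr_fun heq measurableSet_Ioi
  have hval := integral_comp_rpow_Ioi (fun u : ℝ => u ^ (a - 1) * rexp (-(c * u)))
    (p := (-1:ℝ)) (by norm_num)
  have hreal : ∫ x in Ioi (0:ℝ), x ^ (-a - 1) * rexp (-(c / x)) = (1 / c) ^ a * Real.Gamma a := by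
    rw [← integral_rpow_mul_exp_neg_mul_Ioi ha hcpos, ← hval]
    apply setIntegral_congr_fun measurableSet_Ioi
    intro x hx
    simp only [abs_neg, abs_one, one_mul]
    rw [← heq x hx]
  rw [← ofReal_integral_eq_lintegral_ofReal hI2 ?_, hreal, alg ha hz]
  filter_upwards [ae_restrict_mem measurableSet_Ioi] with x hx
  have : (0:ℝ) < x := hx
  positivity

section Planch
open Real MeasureTheory Complex
open scoped FourierTransform ComplexConjugate

variable {n : ℕ}

lemma contKer : Continuous (fun p : En n × En n =>
    Complex.exp ((-2 * (Real.pi : ℂ) * Complex.I) * ((inner ℝ p.2 p.1 : ℝ) : ℂ))) := by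
  have h1 : Continuous fun p : En n × En n => (inner ℝ p.2 p.1 : ℝ) :=
    continuous_inner.comp (continuous_snd.prodMk continuous_fst)
  exact Complex.continuous_exp.comp (continuous_const.mul (Complex.continuous_ofReal.comp h1))

lemma ftSM (μ : Measure (En n)) [IsFiniteMeasure μ] : StronglyMeasurable (ft μ) :=
  (Continuous.stronglyMeasurable contKer).integral_prod_right'

lemma norm_char (r : ℝ) : ‖Complex.exp ((-2 * (Real.pi : ℂ) * Complex.I) * (r : ℂ))‖ = 1 := by
  have h : (-2 * (Real.pi : ℂ) * Complex.I) * (r : ℂ)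
      = ((-2 * Real.pi * r : ℝ) : ℂ) * Complex.I := by push_cast; ring
  rw [h, Complex.norm_exp_ofReal_mul_I]

lemma norm_ft_le (μ : Measure (En n)) [IsFiniteMeasure μ] (ξ : En n) :
    ‖ft μ ξ‖ ≤ (μ Set.univ).toReal := by
  rw [ft]
  calc ‖∫ x, Complex.exp ((-2 * (Real.pi:ℂ) * Complex.I) * ((inner ℝ x ξ : ℝ) : ℂ)) ∂μ‖
      ≤ ∫ x, ‖Complex.exp ((-2 * (Real.pi:ℂ) * Complex.I) * ((inner ℝ x ξ : ℝ) : ℂ))‖ ∂μ :=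
        norm_integral_le_integral_norm _
    _ = ∫ (_ : En n), (1:ℝ) ∂μ := integral_congr_ae (Filter.Eventually.of_forall fun x => norm_char _)
    _ = (μ Set.univ).toReal := by simp [Measure.real]

lemma gauss_int {t : ℝ} (ht : 0 < t) :
    Integrable (fun v : En n => rexp (-(Real.pi / t) * ‖v‖ ^ 2)) volume := by
  have h := GaussianFourier.integrable_cexp_neg_mul_sq_norm_add (V := En n)
    (b := ((Real.pi / t : ℝ) : ℂ)) (by simpa using div_pos Real.pi_pos ht) 0 0
  have h2 := h.norm
  refine h2.congr (Filter.Eventually.of_forall fun v => ?_)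
  have e : (-(((Real.pi / t : ℝ) : ℂ)) * (‖v‖ : ℂ) ^ 2 + 0 * ((inner ℝ (0 : En n) v : ℝ) : ℂ))
      = ((-(Real.pi / t) * ‖v‖ ^ 2 : ℝ) : ℂ) := by push_cast; ring
  simp only [e, Complex.norm_exp_ofReal]

lemma plancherel_real (μ : Measure (En n)) [IsFiniteMeasure μ] {t : ℝ} (ht : 0 < t) :
    ∫ p : En n × En n, rexp (-(Real.pi * ‖p.1 - p.2‖ ^ 2 * t)) ∂(μ.prod μ)
      = t ^ (-(n : ℝ) / 2) * ∫ ξ : En n, ‖ft μ ξ‖ ^ 2 * rexp (-(Real.pi * ‖ξ‖ ^ 2 / t)) := by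
  have hb : (0:ℝ) < Real.pi / t := div_pos Real.pi_pos ht
  have htC : (t : ℂ) ≠ 0 := Complex.ofReal_ne_zero.mpr ht.ne'
  -- the key pointwise Fourier identity
  have key : ∀ z : En n, ((rexp (-(Real.pi * ‖z‖ ^ 2 * t)) : ℝ) : ℂ)
      = (t : ℂ) ^ ((-(n : ℝ) / 2 : ℝ) : ℂ) * ∫ ξ : En n,
          Complex.exp (((-2 * Real.pi * (inner ℝ ξ z : ℝ) : ℝ) : ℂ) * Complex.I) *
            Complex.exp (((-(Real.pi / t) * ‖ξ‖ ^ 2 : ℝ) : ℂ)) ∂volume := by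
    intro z
    have h𝓕 := fourier_gaussian_innerProductSpace (V := En n)
      (b := ((Real.pi / t : ℝ) : ℂ)) (by simpa using hb) z
    rw [Real.fourier_eq'] at h𝓕
    simp_rw [smul_eq_mul] at h𝓕
    rw [finrank_euclideanSpace_fin] at h𝓕
    have e2 : ∀ ξ : En n, ((-(Real.pi / t) * ‖ξ‖ ^ 2 : ℝ) : ℂ)
        = -((Real.pi / t : ℝ) : ℂ) * (‖ξ‖ : ℂ) ^ 2 := by intro ξ; push_cast; ring
    simp_rw [e2]
    rw [h𝓕]
    have e1 : ((Real.pi : ℂ) / ((Real.pi / t : ℝ) : ℂ)) = (t : ℂ) := by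
      push_cast
      rw [div_div_eq_mul_div, mul_comm, mul_div_assoc, div_self (Complex.ofReal_ne_zero.mpr Real.pi_pos.ne'), mul_one]
    rw [e1, ← mul_assoc, ← Complex.cpow_add _ _ htC,
      show ((-(n : ℝ) / 2 : ℝ) : ℂ) + ((n : ℕ) : ℂ) / 2 = 0 by push_cast; ring,
      Complex.cpow_zero, one_mul]
    rw [Complex.ofReal_exp]
    congr 1
    have h0 : ((Real.pi / t : ℝ) : ℂ) ≠ 0 := Complex.ofReal_ne_zero.mpr hb.ne'
    rw [eq_div_iff h0]
    push_cast
    field_simp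
  -- Fubini integrand and its integrability
  have hF : Integrable (fun q : (En n × En n) × En n =>
      Complex.exp (((-2 * Real.pi * (inner ℝ q.2 (q.1.1 - q.1.2) : ℝ) : ℝ) : ℂ) * Complex.I) *
        Complex.exp (((-(Real.pi / t) * ‖q.2‖ ^ 2 : ℝ) : ℂ))) ((μ.prod μ).prod volume) := by
    refine Integrable.mono' (g := fun q : (En n × En n) × En n => rexp (-(Real.pi / t) * ‖q.2‖ ^ 2))
      ?_ ?_ ?_
    · have h0 : Integrable (fun _ : En n × En n => (1:ℝ)) (μ.prod μ) := integrable_const _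
      have h1 := h0.mul_prod (gauss_int (n := n) ht)
      refine h1.congr (Filter.Eventually.of_forall fun q => ?_)
      simp
    · have c1 : Continuous fun q : (En n × En n) × En n => (inner ℝ q.2 (q.1.1 - q.1.2) : ℝ) :=
        continuous_inner.comp (continuous_snd.prodMk
          ((continuous_fst.comp continuous_fst).sub (continuous_snd.comp continuous_fst)))
      have c2 : Continuous fun q : (En n × En n) × En n =>
          Complex.exp (((-2 * Real.pi * (inner ℝ q.2 (q.1.1 - q.1.2) : ℝ) : ℝ) : ℂ) * Complex.I) :=
        Complex.continuous_exp.comp ((Complex.continuous_ofReal.comp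
          (continuous_const.mul c1)).mul continuous_const)
      have c3 : Continuous fun q : (En n × En n) × En n =>
          Complex.exp (((-(Real.pi / t) * ‖q.2‖ ^ 2 : ℝ) : ℂ)) :=
        Complex.continuous_exp.comp (Complex.continuous_ofReal.comp
          (continuous_const.mul ((continuous_norm.comp continuous_snd).pow 2)))
      exact (c2.mul c3).aestronglyMeasurable
    · refine Filter.Eventually.of_forall fun q => ?_
      rw [norm_mul, Complex.norm_exp_ofReal_mul_I, one_mul,
        Complex.norm_exp_ofReal]
  -- identify the two inner integrals with ft and its conjugate
  have hsplit : ∀ ξ : En n, (∫ p : En n × En n,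
      Complex.exp (((-2 * Real.pi * (inner ℝ ξ (p.1 - p.2) : ℝ) : ℝ) : ℂ) * Complex.I) ∂(μ.prod μ))
        = ((‖ft μ ξ‖ ^ 2 : ℝ) : ℂ) := by
    intro ξ
    have e : ∀ p : En n × En n,
        Complex.exp (((-2 * Real.pi * (inner ℝ ξ (p.1 - p.2) : ℝ) : ℝ) : ℂ) * Complex.I)
          = Complex.exp (((-2 * Real.pi * (inner ℝ p.1 ξ : ℝ) : ℝ) : ℂ) * Complex.I) *
            Complex.exp (((2 * Real.pi * (inner ℝ p.2 ξ : ℝ) : ℝ) : ℂ) * Complex.I) := by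
      intro p
      rw [← Complex.exp_add]
      congr 1
      have : (inner ℝ ξ (p.1 - p.2) : ℝ) = (inner ℝ p.1 ξ : ℝ) - (inner ℝ p.2 ξ : ℝ) := by
        rw [inner_sub_right, real_inner_comm ξ p.1, real_inner_comm ξ p.2]
      rw [this]
      push_cast
      ring
    simp_rw [e]
    rw [integral_prod_mul (μ := μ) (ν := μ)
      (f := fun x : En n => Complex.exp (((-2 * Real.pi * (inner ℝ x ξ : ℝ) : ℝ) : ℂ) * Complex.I))
      (g := fun y : En n => Complex.exp (((2 * Real.pi * (inner ℝ y ξ : ℝ) : ℝ) : ℂ) * Complex.I))]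
    have hft : (∫ x, Complex.exp (((-2 * Real.pi * (inner ℝ x ξ : ℝ) : ℝ) : ℂ) * Complex.I) ∂μ)
        = ft μ ξ := by
      rw [ft]
      refine integral_congr_ae (Filter.Eventually.of_forall fun x => ?_)
      show Complex.exp (((-2 * Real.pi * (inner ℝ x ξ : ℝ) : ℝ) : ℂ) * Complex.I)
          = Complex.exp ((-2 * (Real.pi : ℂ) * Complex.I) * ((inner ℝ x ξ : ℝ) : ℂ))
      congr 1
      push_cast
      ring
    have hconj : (∫ x, Complex.exp (((2 * Real.pi * (inner ℝ x ξ : ℝ) : ℝ) : ℂ) * Complex.I) ∂μ)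
        = (starRingEnd ℂ) (ft μ ξ) := by
      rw [ft, ← integral_conj]
      refine integral_congr_ae (Filter.Eventually.of_forall fun x => ?_)
      show Complex.exp (((2 * Real.pi * (inner ℝ x ξ : ℝ) : ℝ) : ℂ) * Complex.I)
          = (starRingEnd ℂ) (Complex.exp ((-2 * (Real.pi : ℂ) * Complex.I) * ((inner ℝ x ξ : ℝ) : ℂ)))
      rw [← Complex.exp_conj]
      congr 1
      simp only [map_mul, map_neg, map_ofNat, Complex.conj_I, Complex.conj_ofReal]
      push_cast
      ring
    rw [hft, hconj, Complex.mul_conj]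
    norm_cast
    rw [Complex.normSq_eq_norm_sq]
  -- now the computation over ℂ
  apply Complex.ofReal_injective
  calc ((∫ p : En n × En n, rexp (-(Real.pi * ‖p.1 - p.2‖ ^ 2 * t)) ∂(μ.prod μ) : ℝ) : ℂ)
      = ∫ p : En n × En n, ((rexp (-(Real.pi * ‖p.1 - p.2‖ ^ 2 * t)) : ℝ) : ℂ) ∂(μ.prod μ) :=
        integral_ofReal.symm
    _ = ∫ p : En n × En n, (t : ℂ) ^ ((-(n : ℝ) / 2 : ℝ) : ℂ) * ∫ ξ : En n,
          Complex.exp (((-2 * Real.pi * (inner ℝ ξ (p.1 - p.2) : ℝ) : ℝ) : ℂ) * Complex.I) *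
            Complex.exp (((-(Real.pi / t) * ‖ξ‖ ^ 2 : ℝ) : ℂ)) ∂volume ∂(μ.prod μ) :=
        integral_congr_ae (Filter.Eventually.of_forall fun p => key (p.1 - p.2))
    _ = (t : ℂ) ^ ((-(n : ℝ) / 2 : ℝ) : ℂ) * ∫ p : En n × En n, ∫ ξ : En n,
          Complex.exp (((-2 * Real.pi * (inner ℝ ξ (p.1 - p.2) : ℝ) : ℝ) : ℂ) * Complex.I) *
            Complex.exp (((-(Real.pi / t) * ‖ξ‖ ^ 2 : ℝ) : ℂ)) ∂volume ∂(μ.prod μ) :=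
        integral_const_mul _ _
    _ = (t : ℂ) ^ ((-(n : ℝ) / 2 : ℝ) : ℂ) * ∫ ξ : En n, ∫ p : En n × En n,
          Complex.exp (((-2 * Real.pi * (inner ℝ ξ (p.1 - p.2) : ℝ) : ℝ) : ℂ) * Complex.I) *
            Complex.exp (((-(Real.pi / t) * ‖ξ‖ ^ 2 : ℝ) : ℂ)) ∂(μ.prod μ) ∂volume := by
        rw [integral_integral_swap hF]
    _ = (t : ℂ) ^ ((-(n : ℝ) / 2 : ℝ) : ℂ) * ∫ ξ : En n,
          (∫ p : En n × En n,
            Complex.exp (((-2 * Real.pi * (inner ℝ ξ (p.1 - p.2) : ℝ) : ℝ) : ℂ) * Complex.I) ∂(μ.prod μ)) *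
              Complex.exp (((-(Real.pi / t) * ‖ξ‖ ^ 2 : ℝ) : ℂ)) ∂volume := by
        congr 1
        refine integral_congr_ae (Filter.Eventually.of_forall fun ξ => ?_)
        exact integral_mul_const _ _
    _ = (t : ℂ) ^ ((-(n : ℝ) / 2 : ℝ) : ℂ) * ∫ ξ : En n,
          ((‖ft μ ξ‖ ^ 2 * rexp (-(Real.pi * ‖ξ‖ ^ 2 / t)) : ℝ) : ℂ) ∂volume := by
        congr 1
        refine integral_congr_ae (Filter.Eventually.of_forall fun ξ => ?_)
        show (∫ p : En n × En n,
            Complex.exp (((-2 * Real.pi * (inner ℝ ξ (p.1 - p.2) : ℝ) : ℝ) : ℂ) * Complex.I)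
              ∂(μ.prod μ)) * Complex.exp (((-(Real.pi / t) * ‖ξ‖ ^ 2 : ℝ) : ℂ))
          = ((‖ft μ ξ‖ ^ 2 * rexp (-(Real.pi * ‖ξ‖ ^ 2 / t)) : ℝ) : ℂ)
        rw [hsplit ξ,
          show (-(Real.pi / t) * ‖ξ‖ ^ 2 : ℝ) = -(Real.pi * ‖ξ‖ ^ 2 / t) by ring,
          Complex.ofReal_mul, Complex.ofReal_exp]
    _ = ((t ^ (-(n : ℝ) / 2) * ∫ ξ : En n, ‖ft μ ξ‖ ^ 2 * rexp (-(Real.pi * ‖ξ‖ ^ 2 / t)) : ℝ) : ℂ) := by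
        rw [Complex.ofReal_mul, Complex.ofReal_cpow ht.le]
        congr 1
        exact integral_ofReal
lemma plancherel (μ : Measure (En n)) [IsFiniteMeasure μ] {t : ℝ} (ht : 0 < t) :
    ∫⁻ p : En n × En n, ENNReal.ofReal (rexp (-(Real.pi * ‖p.1 - p.2‖ ^ 2 * t))) ∂(μ.prod μ)
      = ENNReal.ofReal (t ^ (-(n : ℝ) / 2)) *
        ∫⁻ ξ, (‖ft μ ξ‖₊ : ℝ≥0∞) ^ 2 * ENNReal.ofReal (rexp (-(Real.pi * ‖ξ‖ ^ 2 / t)))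
          ∂(volume : Measure (En n)) := by
  have hL : Integrable (fun p : En n × En n => rexp (-(Real.pi * ‖p.1 - p.2‖ ^ 2 * t)))
      (μ.prod μ) := by
    refine Integrable.mono' (integrable_const (1:ℝ)) ?_ ?_
    · exact (Real.continuous_exp.comp (((continuous_const.mul
        (((continuous_fst.sub continuous_snd).norm).pow 2)).mul continuous_const).neg)).aestronglyMeasurable
    · refine Filter.Eventually.of_forall fun p => ?_
      rw [Real.norm_eq_abs, abs_of_pos (Real.exp_pos _)]
      exact Real.exp_le_one_iff.mpr (neg_nonpos.mpr (by positivity))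
  have hg : Integrable (fun ξ : En n => rexp (-(Real.pi * ‖ξ‖ ^ 2 / t))) volume := by
    refine (gauss_int (n := n) ht).congr (Filter.Eventually.of_forall fun v => ?_)
    show rexp (-(Real.pi / t) * ‖v‖ ^ 2) = rexp (-(Real.pi * ‖v‖ ^ 2 / t))
    rw [show -(Real.pi / t) * ‖v‖ ^ 2 = -(Real.pi * ‖v‖ ^ 2 / t) from by ring]
  have hR : Integrable (fun ξ : En n => ‖ft μ ξ‖ ^ 2 * rexp (-(Real.pi * ‖ξ‖ ^ 2 / t))) volume := by
    refine Integrable.mono' (hg.const_mul ((μ Set.univ).toReal ^ 2)) ?_ ?_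
    · exact ((((ftSM μ).measurable.norm.pow_const 2)).aestronglyMeasurable.mul
        (Real.continuous_exp.comp (((continuous_const.mul
          ((continuous_norm).pow 2)).div_const t).neg)).aestronglyMeasurable)
    · refine Filter.Eventually.of_forall fun ξ => ?_
      rw [show ‖‖ft μ ξ‖ ^ 2 * rexp (-(Real.pi * ‖ξ‖ ^ 2 / t))‖
        = ‖ft μ ξ‖ ^ 2 * rexp (-(Real.pi * ‖ξ‖ ^ 2 / t)) from abs_of_nonneg (by positivity)]
      have h1 : ‖ft μ ξ‖ ^ 2 ≤ (μ Set.univ).toReal ^ 2 :=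
        pow_le_pow_left₀ (norm_nonneg _) (norm_ft_le μ ξ) 2
      exact mul_le_mul_of_nonneg_right h1 (Real.exp_pos _).le
  rw [← ofReal_integral_eq_lintegral_ofReal hL
    (Filter.Eventually.of_forall fun p => (Real.exp_pos _).le)]
  have hRe : ∀ ξ : En n, (‖ft μ ξ‖₊ : ℝ≥0∞) ^ 2 * ENNReal.ofReal (rexp (-(Real.pi * ‖ξ‖ ^ 2 / t)))
      = ENNReal.ofReal (‖ft μ ξ‖ ^ 2 * rexp (-(Real.pi * ‖ξ‖ ^ 2 / t))) := by
    intro ξ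
    rw [ENNReal.ofReal_mul (by positivity), ← enorm_eq_nnnorm, ← ofReal_norm,
      ← ENNReal.ofReal_pow (norm_nonneg _)]
  simp_rw [hRe]
  rw [← ofReal_integral_eq_lintegral_ofReal hR
    (Filter.Eventually.of_forall fun ξ => by positivity)]
  rw [← ENNReal.ofReal_mul (by positivity : (0:ℝ) ≤ t ^ (-(n : ℝ) / 2))]
  exact congrArg ENNReal.ofReal (plancherel_real μ ht)

end Planch

open Real MeasureTheory

/-- `I_s(μ) = c(n,s) ∫ |μ̂(ξ)|² |ξ|^{s-n} dξ` for `0 < s < n`. -/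
theorem stmt5 (n : ℕ) (s : ℝ) (h0 : 0 < s) (h1 : s < n) :
    ∃ c : ℝ, 0 < c ∧ ∀ (μ : Measure (En n)) [IsFiniteMeasure μ],
      (∃ K : Set (En n), IsCompact K ∧ μ Kᶜ = 0) →
      energy μ s
        = ENNReal.ofReal c *
          ∫⁻ ξ, (‖ft μ ξ‖₊ : ℝ≥0∞) ^ 2 * (‖ξ‖₊ : ℝ≥0∞) ^ (s - (n : ℝ)) ∂(volume : Measure (En n)) := by
  have hn : (0:ℝ) < (n:ℝ) := lt_trans h0 h1
  have hnnat : 0 < n := by exact_mod_cast hn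
  have ha1 : (0:ℝ) < s / 2 := by linarith
  have ha2 : (0:ℝ) < ((n:ℝ) - s) / 2 := by linarith
  set cL : ℝ := π ^ (-(s / 2)) * Real.Gamma (s / 2) with hcLdef
  set cR : ℝ := π ^ (-(((n:ℝ) - s) / 2)) * Real.Gamma (((n:ℝ) - s) / 2) with hcRdef
  have hcL : 0 < cL := by
    have := Real.Gamma_pos_of_pos ha1
    positivity
  have hcR : 0 < cR := by
    have := Real.Gamma_pos_of_pos ha2
    positivity
  refine ⟨cR / cL, by positivity, ?_⟩
  intro μ _ _
  haveI : Nonempty (Fin n) := ⟨⟨0, hnnat⟩⟩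
  set ν : Measure ℝ := (volume : Measure ℝ).restrict (Set.Ioi 0) with hν
  set X : ℝ≥0∞ :=
    ∫⁻ ξ, (‖ft μ ξ‖₊ : ℝ≥0∞) ^ 2 * (‖ξ‖₊ : ℝ≥0∞) ^ (s - (n : ℝ)) ∂(volume : Measure (En n))
    with hX
  -- pointwise kernel identities
  have haveA : ∀ z : En n,
      ∫⁻ t in Set.Ioi (0:ℝ), ENNReal.ofReal (t ^ (s / 2 - 1) * rexp (-(π * ‖z‖ ^ 2 * t)))
        = ENNReal.ofReal cL * (‖z‖₊ : ℝ≥0∞) ^ (-s) := by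
    intro z
    have h := kernA (E := En n) ha1 z
    rwa [show -(2 * (s / 2)) = -s by ring] at h
  have haveB : ∀ z : En n, z ≠ 0 →
      ∫⁻ t in Set.Ioi (0:ℝ),
          ENNReal.ofReal (t ^ (-(((n:ℝ) - s) / 2) - 1) * rexp (-(π * ‖z‖ ^ 2 / t)))
        = ENNReal.ofReal cR * (‖z‖₊ : ℝ≥0∞) ^ (s - (n:ℝ)) := by
    intro z hz
    have h := kernB (E := En n) ha2 hz
    rwa [show -(2 * (((n:ℝ) - s) / 2)) = s - (n:ℝ) by ring] at h
  -- measurability facts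
  have m0 : Measurable fun p : En n × En n => (‖p.1 - p.2‖₊ : ℝ≥0∞) ^ (-s) :=
    ((continuous_fst.sub continuous_snd).measurable.nnnorm.coe_nnreal_ennreal).pow measurable_const
  have m1 : Measurable fun q : (En n × En n) × ℝ =>
      ENNReal.ofReal (q.2 ^ (s / 2 - 1) * rexp (-(π * ‖q.1.1 - q.1.2‖ ^ 2 * q.2))) := by
    have mnorm : Measurable fun q : (En n × En n) × ℝ => ‖q.1.1 - q.1.2‖ :=
      (((continuous_fst.comp continuous_fst).sub
        (continuous_snd.comp continuous_fst)).norm).measurable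
    exact ENNReal.measurable_ofReal.comp
      ((measurable_snd.pow measurable_const).mul
        (Real.measurable_exp.comp (((measurable_const.mul (mnorm.pow_const 2)).mul
          measurable_snd).neg)))
  have m2 : Measurable fun q : ℝ × En n =>
      (‖ft μ q.2‖₊ : ℝ≥0∞) ^ 2 *
        ENNReal.ofReal (q.1 ^ (-(((n:ℝ) - s) / 2) - 1) * rexp (-(π * ‖q.2‖ ^ 2 / q.1))) := by
    have mft : Measurable fun q : ℝ × En n => (‖ft μ q.2‖₊ : ℝ≥0∞) ^ 2 :=
      (((ftSM μ).measurable.comp measurable_snd).nnnorm.coe_nnreal_ennreal).pow_const 2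
    refine mft.mul (ENNReal.measurable_ofReal.comp ((measurable_fst.pow measurable_const).mul
      (Real.measurable_exp.comp ((((measurable_const.mul
        (((continuous_norm.comp continuous_snd).measurable).pow_const 2))).div
          measurable_fst).neg))))
  -- the main computation
  have hmain : ENNReal.ofReal cL * energy μ s = ENNReal.ofReal cR * X := by
    calc ENNReal.ofReal cL * energy μ s
        = ENNReal.ofReal cL * ∫⁻ p : En n × En n, (‖p.1 - p.2‖₊ : ℝ≥0∞) ^ (-s) ∂(μ.prod μ) := by
          rw [energy, ← lintegral_prod _ m0.aemeasurable]
      _ = ∫⁻ p : En n × En n, ENNReal.ofReal cL * (‖p.1 - p.2‖₊ : ℝ≥0∞) ^ (-s) ∂(μ.prod μ) :=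
          (lintegral_const_mul' _ _ ENNReal.ofReal_ne_top).symm
      _ = ∫⁻ p : En n × En n, (∫⁻ t in Set.Ioi (0:ℝ),
            ENNReal.ofReal (t ^ (s / 2 - 1) * rexp (-(π * ‖p.1 - p.2‖ ^ 2 * t)))) ∂(μ.prod μ) :=
          lintegral_congr fun p => (haveA (p.1 - p.2)).symm
      _ = ∫⁻ t in Set.Ioi (0:ℝ), ∫⁻ p : En n × En n,
            ENNReal.ofReal (t ^ (s / 2 - 1) * rexp (-(π * ‖p.1 - p.2‖ ^ 2 * t))) ∂(μ.prod μ) :=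
          lintegral_lintegral_swap m1.aemeasurable
      _ = ∫⁻ t in Set.Ioi (0:ℝ), ENNReal.ofReal (t ^ (s / 2 - 1)) *
            (ENNReal.ofReal (t ^ (-(n:ℝ) / 2)) *
              ∫⁻ ξ, (‖ft μ ξ‖₊ : ℝ≥0∞) ^ 2 *
                ENNReal.ofReal (rexp (-(π * ‖ξ‖ ^ 2 / t))) ∂(volume : Measure (En n))) := by
          refine lintegral_congr_ae ?_
          filter_upwards [ae_restrict_mem measurableSet_Ioi] with t htpos
          have ht : (0:ℝ) < t := htpos
          rw [← plancherel μ ht, ← lintegral_const_mul' _ _ ENNReal.ofReal_ne_top]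
          refine lintegral_congr fun p => ?_
          rw [← ENNReal.ofReal_mul (by positivity)]
      _ = ∫⁻ t in Set.Ioi (0:ℝ), ∫⁻ ξ, (‖ft μ ξ‖₊ : ℝ≥0∞) ^ 2 *
            ENNReal.ofReal (t ^ (-(((n:ℝ) - s) / 2) - 1) * rexp (-(π * ‖ξ‖ ^ 2 / t)))
            ∂(volume : Measure (En n)) := by
          refine lintegral_congr_ae ?_
          filter_upwards [ae_restrict_mem measurableSet_Ioi] with t htpos
          have ht : (0:ℝ) < t := htpos
          rw [← mul_assoc, ← ENNReal.ofReal_mul (by positivity), ← Real.rpow_add ht,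
            show s / 2 - 1 + -(n:ℝ) / 2 = -(((n:ℝ) - s) / 2) - 1 by ring,
            ← lintegral_const_mul' _ _ ENNReal.ofReal_ne_top]
          refine lintegral_congr fun ξ => ?_
          rw [← mul_assoc, mul_comm (ENNReal.ofReal _) ((‖ft μ ξ‖₊ : ℝ≥0∞) ^ 2), mul_assoc,
            ← ENNReal.ofReal_mul (by positivity)]
      _ = ∫⁻ ξ, (∫⁻ t in Set.Ioi (0:ℝ), (‖ft μ ξ‖₊ : ℝ≥0∞) ^ 2 *
            ENNReal.ofReal (t ^ (-(((n:ℝ) - s) / 2) - 1) * rexp (-(π * ‖ξ‖ ^ 2 / t))))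
            ∂(volume : Measure (En n)) :=
          lintegral_lintegral_swap m2.aemeasurable
      _ = ∫⁻ ξ, (‖ft μ ξ‖₊ : ℝ≥0∞) ^ 2 * (ENNReal.ofReal cR * (‖ξ‖₊ : ℝ≥0∞) ^ (s - (n:ℝ)))
            ∂(volume : Measure (En n)) := by
          refine lintegral_congr_ae ?_
          have hz : ∀ᵐ ξ : En n ∂(volume : Measure (En n)), ξ ≠ 0 := by
            refine (ae_iff).mpr ?_
            simpa using measure_singleton (0 : En n)
          filter_upwards [hz] with ξ hξ
          rw [lintegral_const_mul' _ _ (by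
            exact ENNReal.pow_ne_top ENNReal.coe_ne_top), haveB ξ hξ]
      _ = ENNReal.ofReal cR * X := by
          rw [hX, ← lintegral_const_mul' _ _ ENNReal.ofReal_ne_top]
          refine lintegral_congr fun ξ => ?_
          ring
  -- conclude
  have hcl0 : ENNReal.ofReal cL ≠ 0 := (ENNReal.ofReal_pos.mpr hcL).ne'
  calc energy μ s = (ENNReal.ofReal cL)⁻¹ * (ENNReal.ofReal cL * energy μ s) := by
        rw [← mul_assoc, ENNReal.inv_mul_cancel hcl0 ENNReal.ofReal_ne_top, one_mul]
    _ = (ENNReal.ofReal cL)⁻¹ * (ENNReal.ofReal cR * X) := by rw [hmain]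
    _ = ENNReal.ofReal (cR / cL) * X := by
        rw [div_eq_mul_inv, ENNReal.ofReal_mul' (inv_nonneg.mpr hcL.le),
          ENNReal.ofReal_inv_of_pos hcL]
        ring
end
end
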